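/- arXiv:2009.02402 — 3 statements merged into one kernel-verified Lean document; each statement's English description precedes it below -/
import Mathlib

section
/- Let n ≥ 5, p ≥ 1 and s > 1, and let K₀(n,s), K₁(n,s), K₂(n,s), K₃(n,s) be the cylindrical bi-Laplacian coefficients. Let V = (v_1, …, v_p) : ℝ → ℝ^p be C⁴ and satisfy the autonomous ODE system v_i'''' + K₃ v_i''' + K₂ v_i'' + K₁ v_i' + K₀ v_i = |V|^{s−1} v_i on ℝ for each i. Define the Hamiltonian energy H(t) = −⟨V'''(t), V'(t)⟩ − K₃ ⟨V''(t), V'(t)⟩ + (1/2)( |V''(t)|² − K₂ |V'(t)|² − K₀ |V(t)|² ) + (1/(s+1)) |V(t)|^{s+1}. Then H is differentiable and H'(t) = K₁ |V'(t)|² − K₃ |V''(t)|² for every t ∈ ℝ. -/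
open Filter Topology

/-- The cylindrical coefficient K₀(n,s). -/
noncomputable def K0 (n : ℕ) (s : ℝ) : ℝ :=
  8 / (s - 1) ^ 4 *
    (((n : ℝ) - 2) * ((n : ℝ) - 4) * (s - 1) ^ 3
      + 2 * ((n : ℝ) ^ 2 - 10 * (n : ℝ) + 20) * (s - 1) ^ 2
      - 16 * ((n : ℝ) - 4) * (s - 1) + 32)

/-- The cylindrical coefficient K₁(n,s). -/
noncomputable def K1 (n : ℕ) (s : ℝ) : ℝ :=
  -2 / (s - 1) ^ 3 *
    (((n : ℝ) - 2) * ((n : ℝ) - 4) * (s - 1) ^ 3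
      + 4 * ((n : ℝ) ^ 2 - 10 * (n : ℝ) + 20) * (s - 1) ^ 2
      - 48 * ((n : ℝ) - 4) * (s - 1) + 128)

/-- The cylindrical coefficient K₂(n,s). -/
noncomputable def K2 (n : ℕ) (s : ℝ) : ℝ :=
  1 / (s - 1) ^ 2 *
    (((n : ℝ) ^ 2 - 10 * (n : ℝ) + 20) * (s - 1) ^ 2
      - 24 * ((n : ℝ) - 4) * (s - 1) + 96)

/-- The cylindrical coefficient K₃(n,s). -/
noncomputable def K3 (n : ℕ) (s : ℝ) : ℝ :=
  2 / (s - 1) * (((n : ℝ) - 4) * (s - 1) - 8)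

/-- derivative of the Hamiltonian energy along solutions of the
autonomous cylindrical ODE system (radial monotonicity formula of the
Pohozaev functional). -/
theorem statement9 (n p : ℕ) (hn : 5 ≤ n) (hp : 1 ≤ p) (s : ℝ) (hs : 1 < s)
    (v : Fin p → ℝ → ℝ)
    (hC4 : ∀ i, ContDiff ℝ 4 (v i))
    (hode : ∀ i, ∀ t : ℝ,
      iteratedDeriv 4 (v i) t + K3 n s * iteratedDeriv 3 (v i) t
        + K2 n s * iteratedDeriv 2 (v i) t + K1 n s * deriv (v i) t
        + K0 n s * v i t
        = (Real.sqrt (∑ j, v j t ^ 2)) ^ (s - 1) * v i t) :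
    ∀ t : ℝ,
      HasDerivAt
        (fun τ : ℝ =>
          -(∑ i, iteratedDeriv 3 (v i) τ * deriv (v i) τ)
            - K3 n s * (∑ i, iteratedDeriv 2 (v i) τ * deriv (v i) τ)
            + (1 / 2) * ((∑ i, iteratedDeriv 2 (v i) τ ^ 2)
                - K2 n s * (∑ i, deriv (v i) τ ^ 2)
                - K0 n s * (∑ i, v i τ ^ 2))
            + (1 / (s + 1)) * (Real.sqrt (∑ i, v i τ ^ 2)) ^ (s + 1))
        (K1 n s * (∑ i, deriv (v i) t ^ 2)
          - K3 n s * (∑ i, iteratedDeriv 2 (v i) t ^ 2)) t := by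
  intro t
  classical
  have hd : ∀ k : ℕ, k < 4 → ∀ i,
      HasDerivAt (iteratedDeriv k (v i)) (iteratedDeriv (k + 1) (v i) t) t := by
    intro k hk i
    have hdiff : DifferentiableAt ℝ (iteratedDeriv k (v i)) t :=
      ((hC4 i).differentiable_iteratedDeriv k (by exact_mod_cast hk)) t
    have := hdiff.hasDerivAt
    rwa [iteratedDeriv_succ]
  have hd0 : ∀ i, HasDerivAt (v i) (deriv (v i) t) t := by
    intro i
    have := hd 0 (by norm_num) i
    simpa [iteratedDeriv_zero, iteratedDeriv_one] using this
  have hd1 : ∀ i, HasDerivAt (deriv (v i)) (iteratedDeriv 2 (v i) t) t := by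
    intro i
    have := hd 1 (by norm_num) i
    simpa [iteratedDeriv_one] using this
  have hd2 : ∀ i, HasDerivAt (iteratedDeriv 2 (v i)) (iteratedDeriv 3 (v i) t) t :=
    fun i => hd 2 (by norm_num) i
  have hd3 : ∀ i, HasDerivAt (iteratedDeriv 3 (v i)) (iteratedDeriv 4 (v i) t) t :=
    fun i => hd 3 (by norm_num) i
  -- the sum of squares and its derivative
  have hQ : HasDerivAt (fun τ => ∑ i, v i τ ^ 2)
      (∑ i, 2 * v i t * deriv (v i) t) t := by
    refine HasDerivAt.fun_sum fun i _ => ?_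
    simpa [mul_comm, mul_assoc] using (hd0 i).fun_pow 2
  have hQ0 : (0:ℝ) ≤ ∑ i, v i t ^ 2 := Finset.sum_nonneg fun i _ => sq_nonneg _
  have hsp : (1:ℝ) ≤ (s + 1) / 2 := by linarith
  -- rewrite the nonlinear term as an rpow of the sum of squares
  have hsqrt : ∀ τ : ℝ, (Real.sqrt (∑ i, v i τ ^ 2)) ^ (s + 1)
      = (∑ i, v i τ ^ 2) ^ ((s + 1) / 2 : ℝ) := by
    intro τ
    have h0 : (0:ℝ) ≤ ∑ i, v i τ ^ 2 := Finset.sum_nonneg fun i _ => sq_nonneg _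
    rw [Real.sqrt_eq_rpow, ← Real.rpow_mul h0]
    congr 1
    ring
  have hlast : HasDerivAt
      (fun τ : ℝ => (1 / (s + 1)) * (Real.sqrt (∑ i, v i τ ^ 2)) ^ (s + 1))
      ((1 / (s + 1)) * ((∑ i, 2 * v i t * deriv (v i) t) * ((s + 1) / 2)
        * (∑ i, v i t ^ 2) ^ ((s + 1) / 2 - 1 : ℝ))) t := by
    have h := (hQ.rpow_const (Or.inr hsp)).const_mul (1 / (s + 1))
    refine h.congr_of_eventuallyEq (Filter.Eventually.of_forall fun τ => ?_)
    simp only [hsqrt]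
  have hS3 : HasDerivAt (fun τ => ∑ i, iteratedDeriv 3 (v i) τ * deriv (v i) τ)
      (∑ i, (iteratedDeriv 4 (v i) t * deriv (v i) t
        + iteratedDeriv 3 (v i) t * iteratedDeriv 2 (v i) t)) t :=
    HasDerivAt.fun_sum fun i _ => (hd3 i).mul (hd1 i)
  have hS2 : HasDerivAt (fun τ => ∑ i, iteratedDeriv 2 (v i) τ * deriv (v i) τ)
      (∑ i, (iteratedDeriv 3 (v i) t * deriv (v i) t
        + iteratedDeriv 2 (v i) t * iteratedDeriv 2 (v i) t)) t :=
    HasDerivAt.fun_sum fun i _ => (hd2 i).mul (hd1 i)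
  have hS2sq : HasDerivAt (fun τ => ∑ i, iteratedDeriv 2 (v i) τ ^ 2)
      (∑ i, 2 * iteratedDeriv 2 (v i) t * iteratedDeriv 3 (v i) t) t := by
    refine HasDerivAt.fun_sum fun i _ => ?_
    simpa [mul_comm, mul_assoc] using (hd2 i).fun_pow 2
  have hS1sq : HasDerivAt (fun τ => ∑ i, deriv (v i) τ ^ 2)
      (∑ i, 2 * deriv (v i) t * iteratedDeriv 2 (v i) t) t := by
    refine HasDerivAt.fun_sum fun i _ => ?_
    simpa [mul_comm, mul_assoc] using (hd1 i).fun_pow 2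
  -- assemble
  have hmain := ((hS3.neg.sub (hS2.const_mul (K3 n s))).add
      (((hS2sq.sub (hS1sq.const_mul (K2 n s))).sub (hQ.const_mul (K0 n s))).const_mul
        (1 / 2))).add hlast
  convert hmain using 1
  · rfl
  · rfl
  · rfl
  -- now the algebraic identity
  have hA : ((∑ i, v i t ^ 2) ^ ((s + 1) / 2 - 1 : ℝ))
      = (Real.sqrt (∑ i, v i t ^ 2)) ^ (s - 1) := by
    rw [Real.sqrt_eq_rpow, ← Real.rpow_mul hQ0]
    congr 1
    ring
  set A : ℝ := (Real.sqrt (∑ i, v i t ^ 2)) ^ (s - 1) with hAdef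
  have h4 : ∀ i, iteratedDeriv 4 (v i) t
      = A * v i t - K3 n s * iteratedDeriv 3 (v i) t - K2 n s * iteratedDeriv 2 (v i) t
        - K1 n s * deriv (v i) t - K0 n s * v i t := by
    intro i
    have := hode i t
    linarith
  have hsum4 : ∑ i, iteratedDeriv 4 (v i) t * deriv (v i) t
      = A * (∑ i, v i t * deriv (v i) t)
        - K3 n s * (∑ i, iteratedDeriv 3 (v i) t * deriv (v i) t)
        - K2 n s * (∑ i, iteratedDeriv 2 (v i) t * deriv (v i) t)
        - K1 n s * (∑ i, deriv (v i) t * deriv (v i) t)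
        - K0 n s * (∑ i, v i t * deriv (v i) t) := by
    simp only [Finset.mul_sum, ← Finset.sum_sub_distrib]
    exact Finset.sum_congr rfl fun i _ => by rw [h4 i]; ring
  have hsplit : ∑ i, (iteratedDeriv 4 (v i) t * deriv (v i) t
        + iteratedDeriv 3 (v i) t * iteratedDeriv 2 (v i) t)
      = (∑ i, iteratedDeriv 4 (v i) t * deriv (v i) t)
        + ∑ i, iteratedDeriv 3 (v i) t * iteratedDeriv 2 (v i) t :=
    Finset.sum_add_distrib
  have hsplit2 : ∑ i, (iteratedDeriv 3 (v i) t * deriv (v i) t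
        + iteratedDeriv 2 (v i) t * iteratedDeriv 2 (v i) t)
      = (∑ i, iteratedDeriv 3 (v i) t * deriv (v i) t)
        + ∑ i, iteratedDeriv 2 (v i) t * iteratedDeriv 2 (v i) t :=
    Finset.sum_add_distrib
  have e1 : ∑ i, 2 * v i t * deriv (v i) t = 2 * ∑ i, v i t * deriv (v i) t := by
    rw [Finset.mul_sum]; exact Finset.sum_congr rfl fun i _ => by ring
  have e2 : ∑ i, 2 * deriv (v i) t * iteratedDeriv 2 (v i) t
      = 2 * ∑ i, iteratedDeriv 2 (v i) t * deriv (v i) t := by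
    rw [Finset.mul_sum]; exact Finset.sum_congr rfl fun i _ => by ring
  have e3 : ∑ i, 2 * iteratedDeriv 2 (v i) t * iteratedDeriv 3 (v i) t
      = 2 * ∑ i, iteratedDeriv 3 (v i) t * iteratedDeriv 2 (v i) t := by
    rw [Finset.mul_sum]; exact Finset.sum_congr rfl fun i _ => by ring
  have e4 : ∑ i, deriv (v i) t ^ 2 = ∑ i, deriv (v i) t * deriv (v i) t := by
    exact Finset.sum_congr rfl fun i _ => sq (deriv (v i) t) ▸ by ring
  have e5 : ∑ i, iteratedDeriv 2 (v i) t ^ 2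
      = ∑ i, iteratedDeriv 2 (v i) t * iteratedDeriv 2 (v i) t := by
    exact Finset.sum_congr rfl fun i _ => by ring
  rw [hsplit, hsplit2, hsum4, hA, e1, e2, e3, e4, e5]
  have hsne : s + 1 ≠ 0 := by linarith
  field_simp
  ring
end

section
/- Let n ≥ 5, p ≥ 1 and n/(n−4) < s < (n+4)/(n−4). If U = (u_1, …, u_p) : ℝ^n → ℝ^p is a nonnegative C⁴ solution of Δ² u_i = |U|^{s−1} u_i on all of ℝ^n, then U is superharmonic: −Δ u_i(x) ≥ 0 for every x ∈ ℝ^n and every i = 1, …, p. -/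
set_option linter.unreachableTactic false
set_option linter.unusedTactic false
set_option maxHeartbeats 1000000

open MeasureTheory Metric Filter Topology

/-- The Euclidean Laplacian: sum of second partial derivatives. -/
noncomputable def lap {n : ℕ} (u : EuclideanSpace ℝ (Fin n) → ℝ)
    (x : EuclideanSpace ℝ (Fin n)) : ℝ :=
  ∑ i : Fin n,
    fderiv ℝ (fun y => fderiv ℝ u y (EuclideanSpace.single i 1)) x
      (EuclideanSpace.single i 1)

/-- The bi-Laplacian Δ² = Δ ∘ Δ. -/
noncomputable def bilap {n : ℕ} (u : EuclideanSpace ℝ (Fin n) → ℝ) :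
    EuclideanSpace ℝ (Fin n) → ℝ :=
  lap (lap u)

/-- The pointwise Euclidean norm |U(x)| of a p-map U. -/
noncomputable def vnorm {n p : ℕ} (U : Fin p → EuclideanSpace ℝ (Fin n) → ℝ)
    (x : EuclideanSpace ℝ (Fin n)) : ℝ :=
  Real.sqrt (∑ i, U i x ^ 2)

namespace St10

/-! ### One-dimensional calculus of `max (1-t) 0 ^ k` -/

noncomputable def M (t : ℝ) : ℝ := max (1 - t) 0

lemma M_nonneg (t : ℝ) : 0 ≤ M t := le_max_right _ _

lemma M_le_one {t : ℝ} (ht : 0 ≤ t) : M t ≤ 1 := max_le (by linarith) one_pos.le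

lemma M_eq_zero {t : ℝ} (ht : 1 ≤ t) : M t = 0 := max_eq_right (by linarith)

lemma continuous_M : Continuous M := (continuous_const.sub continuous_id).max continuous_const

lemma hasDerivAt_maxpow (k : ℕ) (hk : 1 ≤ k) (u : ℝ) :
    HasDerivAt (fun u : ℝ => max u 0 ^ (k + 1)) (((k : ℝ) + 1) * max u 0 ^ k) u := by
  rcases lt_trichotomy u 0 with h | h | h
  · have hev : (fun u : ℝ => max u 0 ^ (k + 1)) =ᶠ[𝓝 u] fun _ => (0 : ℝ) := by
      filter_upwards [Iio_mem_nhds h] with x hx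
      simp [max_eq_right (le_of_lt (Set.mem_Iio.1 hx)), zero_pow (by omega : k + 1 ≠ 0)]
    have h0 : HasDerivAt (fun _ : ℝ => (0 : ℝ)) 0 u := hasDerivAt_const _ _
    have : HasDerivAt (fun u : ℝ => max u 0 ^ (k + 1)) 0 u := h0.congr_of_eventuallyEq hev
    simpa [max_eq_right h.le, zero_pow (by omega : k ≠ 0)] using this
  · subst h
    have : (fun u : ℝ => max u 0 ^ (k + 1) - max (0:ℝ) 0 ^ (k+1) - (u - 0) * 0)
        =o[𝓝 (0:ℝ)] fun u => u - 0 := by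
      rw [Asymptotics.isLittleO_iff]
      intro c hc
      have : ∀ᶠ x : ℝ in 𝓝 0, |x - 0| < min c 1 :=
        eventually_abs_sub_lt 0 (lt_min hc one_pos)
      filter_upwards [this] with x hx
      have hx' : |x| < min c 1 := by simpa using hx
      have h1 : max x 0 ≤ |x| := max_le (le_abs_self x) (abs_nonneg x)
      have h2 : max x 0 ^ (k + 1) ≤ |x| ^ (k + 1) :=
        pow_le_pow_left₀ (le_max_right _ _) h1 _
      have h3 : |x| ^ (k + 1) ≤ |x| ^ 2 := by
        apply pow_le_pow_of_le_one (abs_nonneg x) (le_of_lt (lt_of_lt_of_le hx' (min_le_right _ _)))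
        omega
      have h4 : |x| ^ 2 ≤ c * |x| := by
        have : |x| * |x| ≤ c * |x| :=
          mul_le_mul_of_nonneg_right (le_of_lt (lt_of_lt_of_le hx' (min_le_left _ _)))
            (abs_nonneg x)
        nlinarith [abs_nonneg x]
      have h0 : max (0:ℝ) 0 ^ (k+1) = 0 := by
        simp [zero_pow (by omega : k + 1 ≠ 0)]
      have habs : |max x 0 ^ (k+1)| = max x 0 ^ (k+1) :=
        abs_of_nonneg (pow_nonneg (le_max_right x 0) (k+1))
      simp only [sub_zero, mul_zero, h0, Real.norm_eq_abs, habs]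
      calc max x 0 ^ (k+1) ≤ |x| ^ (k+1) := h2
        _ ≤ c * |x| := h3.trans h4
    have := (hasDerivAt_iff_isLittleO (f := fun u : ℝ => max u 0 ^ (k + 1))
      (f' := 0) (x := 0)).2 (by simpa using this)
    simpa [zero_pow (by omega : k ≠ 0)] using this
  · have hev : (fun u : ℝ => max u 0 ^ (k + 1)) =ᶠ[𝓝 u] fun u => u ^ (k + 1) := by
      filter_upwards [Ioi_mem_nhds h] with x hx
      simp [max_eq_left (le_of_lt (Set.mem_Ioi.1 hx))]
    have := (hasDerivAt_pow (k + 1) u).congr_of_eventuallyEq hev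
    simpa [max_eq_left h.le] using this

lemma hasDerivAt_Mpow (k : ℕ) (hk : 1 ≤ k) (t : ℝ) :
    HasDerivAt (fun t : ℝ => M t ^ (k + 1)) (-(((k : ℝ) + 1) * M t ^ k)) t := by
  have h1 : HasDerivAt (fun t : ℝ => 1 - t) (-1) t := by
    exact (hasDerivAt_id' t).const_sub 1
  have := (hasDerivAt_maxpow k hk (1 - t)).comp t h1
  simpa [M, Function.comp_def, mul_comm, mul_neg] using this

/-! ### Radial calculus on Euclidean space -/

variable {n : ℕ}

/-- Partial derivative in the `i`-th coordinate direction. -/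
noncomputable def pd (i : Fin n) (f : EuclideanSpace ℝ (Fin n) → ℝ) :
    EuclideanSpace ℝ (Fin n) → ℝ :=
  fun y => fderiv ℝ f y (EuclideanSpace.single i 1)

lemma lap_eq_sum (f : EuclideanSpace ℝ (Fin n) → ℝ) (x : EuclideanSpace ℝ (Fin n)) :
    lap f x = ∑ i, pd i (pd i f) x := rfl

lemma norm_sq_eq_sum (y : EuclideanSpace ℝ (Fin n)) : ‖y‖ ^ 2 = ∑ i, y i ^ 2 := by
  rw [EuclideanSpace.norm_eq, Real.sq_sqrt]
  · simp [Real.norm_eq_abs, sq_abs]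
  · positivity

section Radial

variable (G G' G'' : ℝ → ℝ)

lemma radial_hasFDerivAt (hG : ∀ t, HasDerivAt G (G' t) t) (y : EuclideanSpace ℝ (Fin n)) :
    HasFDerivAt (fun z : EuclideanSpace ℝ (Fin n) => G (‖z‖ ^ 2))
      (G' (‖y‖ ^ 2) • (2 • (innerSL ℝ) y)) y :=
  HasDerivAt.comp_hasFDerivAt y (hG _) (hasStrictFDerivAt_norm_sq y).hasFDerivAt

lemma radial_differentiable (hG : ∀ t, HasDerivAt G (G' t) t) :
    Differentiable ℝ (fun z : EuclideanSpace ℝ (Fin n) => G (‖z‖ ^ 2)) :=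
  fun y => (radial_hasFDerivAt G G' hG y).differentiableAt

lemma radial_pd (hG : ∀ t, HasDerivAt G (G' t) t) (i : Fin n) :
    pd i (fun z : EuclideanSpace ℝ (Fin n) => G (‖z‖ ^ 2)) =
      fun y => 2 * G' (‖y‖ ^ 2) * y i := by
  funext y
  show fderiv ℝ _ y _ = _
  rw [(radial_hasFDerivAt G G' hG y).fderiv]
  simp [EuclideanSpace.inner_single_right, real_inner_comm]
  ring

lemma radial_pd_hasFDerivAt (hG' : ∀ t, HasDerivAt G' (G'' t) t) (i : Fin n)
    (y : EuclideanSpace ℝ (Fin n)) :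
    HasFDerivAt (fun z : EuclideanSpace ℝ (Fin n) => 2 * G' (‖z‖ ^ 2) * z i)
      ((2 * G' (‖y‖ ^ 2)) • (EuclideanSpace.proj i) +
        (y i) • ((2:ℝ) • (G'' (‖y‖ ^ 2) • (2 • (innerSL ℝ) y)))) y := by
  have hc : HasFDerivAt (fun z : EuclideanSpace ℝ (Fin n) => 2 * G' (‖z‖ ^ 2))
      ((2:ℝ) • (G'' (‖y‖ ^ 2) • (2 • (innerSL ℝ) y))) y :=
    (radial_hasFDerivAt G' G'' hG' y).const_mul 2
  have hd : HasFDerivAt (fun z : EuclideanSpace ℝ (Fin n) => z i)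
      (EuclideanSpace.proj (𝕜 := ℝ) i) y := (EuclideanSpace.proj (𝕜 := ℝ) (i := i)).hasFDerivAt
  exact hc.mul hd

lemma radial_pd_pd (hG : ∀ t, HasDerivAt G (G' t) t) (hG' : ∀ t, HasDerivAt G' (G'' t) t)
    (i : Fin n) (y : EuclideanSpace ℝ (Fin n)) :
    pd i (pd i (fun z : EuclideanSpace ℝ (Fin n) => G (‖z‖ ^ 2))) y =
      2 * G' (‖y‖ ^ 2) + 4 * G'' (‖y‖ ^ 2) * y i ^ 2 := by
  rw [radial_pd G G' hG i]
  show fderiv ℝ _ y _ = _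
  rw [(radial_pd_hasFDerivAt G' G'' hG' i y).fderiv]
  simp [EuclideanSpace.inner_single_right, PiLp.proj_apply,
    EuclideanSpace.single_apply]
  ring

lemma radial_lap (hG : ∀ t, HasDerivAt G (G' t) t) (hG' : ∀ t, HasDerivAt G' (G'' t) t)
    (y : EuclideanSpace ℝ (Fin n)) :
    lap (fun z : EuclideanSpace ℝ (Fin n) => G (‖z‖ ^ 2)) y =
      4 * ‖y‖ ^ 2 * G'' (‖y‖ ^ 2) + 2 * n * G' (‖y‖ ^ 2) := by
  rw [lap_eq_sum]
  have h1 : ∀ i : Fin n, pd i (pd i (fun z : EuclideanSpace ℝ (Fin n) => G (‖z‖ ^ 2))) y =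
      2 * G' (‖y‖ ^ 2) + 4 * G'' (‖y‖ ^ 2) * y i ^ 2 := radial_pd_pd G G' G'' hG hG' (y := y)
  rw [Finset.sum_congr rfl fun i _ => h1 i, Finset.sum_add_distrib, Finset.sum_const,
    ← Finset.mul_sum, ← norm_sq_eq_sum]
  simp [Finset.card_univ]
  ring

lemma radial_hasCompactSupport (hG : ∀ t, 1 ≤ t → G t = 0) :
    HasCompactSupport (fun z : EuclideanSpace ℝ (Fin n) => G (‖z‖ ^ 2)) := by
  apply HasCompactSupport.intro (isCompact_closedBall (0 : EuclideanSpace ℝ (Fin n)) 1)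
  intro y hy
  have : 1 < ‖y‖ := by simpa [dist_eq_norm] using hy
  exact hG _ (by nlinarith)

end Radial

/-! ### Composition with an affine contraction/dilation -/

section Affine

variable (x0 : EuclideanSpace ℝ (Fin n)) (R : ℝ)

lemma affine_hasFDerivAt (y : EuclideanSpace ℝ (Fin n)) :
    HasFDerivAt (fun z : EuclideanSpace ℝ (Fin n) => x0 + R • z)
      (R • ContinuousLinearMap.id ℝ (EuclideanSpace ℝ (Fin n))) y :=
  ((hasFDerivAt_id y).const_smul R).const_add x0

lemma contDiff_affine {m : WithTop ℕ∞} :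
    ContDiff ℝ m (fun z : EuclideanSpace ℝ (Fin n) => x0 + R • z) :=
  contDiff_const.add (contDiff_id.const_smul R)

lemma pd_comp_affine (f : EuclideanSpace ℝ (Fin n) → ℝ) (hf : Differentiable ℝ f) (i : Fin n) :
    pd i (fun z => f (x0 + R • z)) = fun y => R * pd i f (x0 + R • y) := by
  funext y
  show fderiv ℝ _ y _ = _
  have hcomp : HasFDerivAt (fun z : EuclideanSpace ℝ (Fin n) => f (x0 + R • z))
      ((fderiv ℝ f (x0 + R • y)).comp (R • ContinuousLinearMap.id ℝ _)) y :=
    (hf _).hasFDerivAt.comp y (affine_hasFDerivAt x0 R y)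
  rw [hcomp.fderiv]
  simp [pd]

lemma lap_comp_affine (f : EuclideanSpace ℝ (Fin n) → ℝ) (hf : ContDiff ℝ 2 f)
    (y : EuclideanSpace ℝ (Fin n)) :
    lap (fun z => f (x0 + R • z)) y = R ^ 2 * lap f (x0 + R • y) := by
  have hf1 : Differentiable ℝ f := hf.differentiable (by norm_num)
  have hpdf : ∀ i : Fin n, Differentiable ℝ (pd i f) := by
    intro i
    exact ((hf.fderiv_right (m := 1) (by norm_num)).clm_apply contDiff_const).differentiable one_ne_zero
  rw [lap_eq_sum, lap_eq_sum, Finset.mul_sum]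
  refine Finset.sum_congr rfl fun i _ => ?_
  rw [pd_comp_affine x0 R f hf1 i]
  show fderiv ℝ _ y _ = _
  have h1 : HasFDerivAt (fun z : EuclideanSpace ℝ (Fin n) => pd i f (x0 + R • z))
      ((fderiv ℝ (pd i f) (x0 + R • y)).comp (R • ContinuousLinearMap.id ℝ _)) y :=
    (hpdf i _).hasFDerivAt.comp y (affine_hasFDerivAt x0 R y)
  have h2 : HasFDerivAt (fun z : EuclideanSpace ℝ (Fin n) => R * pd i f (x0 + R • z))
      (R • ((fderiv ℝ (pd i f) (x0 + R • y)).comp (R • ContinuousLinearMap.id ℝ _))) y :=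
    h1.const_mul R
  rw [h2.fderiv]
  simp [pd]
  ring

end Affine

/-! ### Smoothness bookkeeping -/

lemma contDiff_pd {m : ℕ} {f : EuclideanSpace ℝ (Fin n) → ℝ}
    (hf : ContDiff ℝ (m + 1 : ℕ) f) (i : Fin n) : ContDiff ℝ (m : ℕ) (pd i f) :=
  (hf.fderiv_right (by exact_mod_cast le_rfl)).clm_apply contDiff_const

lemma contDiff_lap {m : ℕ} {f : EuclideanSpace ℝ (Fin n) → ℝ}
    (hf : ContDiff ℝ (m + 2 : ℕ) f) : ContDiff ℝ (m : ℕ) (lap f) := by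
  have : ContDiff ℝ (m : ℕ) fun x => ∑ i, pd i (pd i f) x := by
    apply ContDiff.sum fun i _ => ?_
    have h1 : ContDiff ℝ (m + 1 : ℕ) (pd i f) := contDiff_pd (by exact_mod_cast hf) i
    exact contDiff_pd h1 i
  exact this

/-! ### Integration by parts -/

lemma integ_mul_cs {f g : EuclideanSpace ℝ (Fin n) → ℝ} (hf : Continuous f) (hg : Continuous g)
    (hgs : HasCompactSupport g) : Integrable (fun y => f y * g y) (volume) :=
  (hf.mul hg).integrable_of_hasCompactSupport (hgs.mul_left)

lemma ibp_once {f g : EuclideanSpace ℝ (Fin n) → ℝ} (i : Fin n)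
    (hf : Differentiable ℝ f) (hg : Differentiable ℝ g)
    (h1 : Integrable (fun y => pd i f y * g y) volume)
    (h2 : Integrable (fun y => f y * pd i g y) volume)
    (h3 : Integrable (fun y => f y * g y) volume) :
    ∫ y, f y * pd i g y = - ∫ y, pd i f y * g y :=
  integral_mul_fderiv_eq_neg_fderiv_mul_of_integrable h1 h2 h3 (fun x _ => hf x) (fun x _ => hg x)

/-- Two-fold integration by parts for the Laplacian against a compactly supported weight. -/
lemma ibp_lap {f g : EuclideanSpace ℝ (Fin n) → ℝ} (hf : ContDiff ℝ 2 f)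
    (hgd : Differentiable ℝ g) (hgpd : ∀ i : Fin n, Differentiable ℝ (pd i g))
    (hgpdc : ∀ i : Fin n, Continuous (pd i g))
    (hgpdpdc : ∀ i : Fin n, Continuous (pd i (pd i g)))
    (hgs : HasCompactSupport g) :
    ∫ y, lap f y * g y = ∫ y, f y * lap g y := by
  have hfd : Differentiable ℝ f := hf.differentiable (by norm_num)
  have hfc : Continuous f := hfd.continuous
  have hfpd : ∀ i : Fin n, Differentiable ℝ (pd i f) := fun i =>
    ((hf.fderiv_right (m := 1) (by norm_num)).clm_apply contDiff_const).differentiable one_ne_zero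
  have hfpdc : ∀ i : Fin n, Continuous (pd i f) := fun i => (hfpd i).continuous
  have hfpdpdc : ∀ i : Fin n, Continuous (pd i (pd i f)) := by
    intro i
    have h1 : ContDiff ℝ (1 : ℕ) (pd i f) := contDiff_pd (by exact_mod_cast hf) i
    have h0 : ContDiff ℝ (0 : ℕ) (pd i (pd i f)) := contDiff_pd h1 i
    exact h0.continuous
  have hgc : Continuous g := hgd.continuous
  have hgspd : ∀ i : Fin n, HasCompactSupport (pd i g) := by
    intro i
    have := (hgs.fderiv ℝ).comp_left
      (g := fun L : EuclideanSpace ℝ (Fin n) →L[ℝ] ℝ => L (EuclideanSpace.single i 1)) rfl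
    exact this
  have hgspdpd : ∀ i : Fin n, HasCompactSupport (pd i (pd i g)) := by
    intro i
    have := ((hgspd i).fderiv ℝ).comp_left
      (g := fun L : EuclideanSpace ℝ (Fin n) →L[ℝ] ℝ => L (EuclideanSpace.single i 1)) rfl
    exact this
  have key : ∀ i : Fin n, ∫ y, pd i (pd i f) y * g y = ∫ y, f y * pd i (pd i g) y := by
    intro i
    have e1 : ∫ y, pd i f y * pd i g y = - ∫ y, pd i (pd i f) y * g y := by
      apply ibp_once i (hfpd i) hgd
      · exact integ_mul_cs (hfpdpdc i) hgc hgs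
      · exact integ_mul_cs (hfpdc i) (hgpdc i) (hgspd i)
      · exact integ_mul_cs (hfpdc i) hgc hgs
    have e2 : ∫ y, f y * pd i (pd i g) y = - ∫ y, pd i f y * pd i g y := by
      apply ibp_once i hfd (hgpd i)
      · exact integ_mul_cs (hfpdc i) (hgpdc i) (hgspd i)
      · exact integ_mul_cs hfc (hgpdpdc i) (hgspdpd i)
      · exact integ_mul_cs hfc (hgpdc i) (hgspd i)
    rw [e2, e1, neg_neg]
  calc ∫ y, lap f y * g y = ∫ y, ∑ i, pd i (pd i f) y * g y := by
        congr 1; funext y; rw [lap_eq_sum, Finset.sum_mul]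
    _ = ∑ i, ∫ y, pd i (pd i f) y * g y := by
        apply integral_finset_sum
        exact fun i _ => integ_mul_cs (hfpdpdc i) hgc hgs
    _ = ∑ i, ∫ y, f y * pd i (pd i g) y := Finset.sum_congr rfl fun i _ => key i
    _ = ∫ y, ∑ i, f y * pd i (pd i g) y := by
        rw [integral_finset_sum]
        exact fun i _ => integ_mul_cs hfc (hgpdpdc i) (hgspdpd i)
    _ = ∫ y, f y * lap g y := by
        congr 1; funext y; rw [lap_eq_sum, Finset.mul_sum]

/-! ### The concrete weights -/

section Weights

noncomputable def G0 (K : ℕ) : ℝ → ℝ := fun t => M t ^ (K + 9)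
noncomputable def G1 (K : ℕ) : ℝ → ℝ := fun t => -(((K : ℝ) + 9) * M t ^ (K + 8))
noncomputable def G2 (K : ℕ) : ℝ → ℝ := fun t => ((K : ℝ) + 9) * (((K : ℝ) + 8) * M t ^ (K + 7))
noncomputable def G3 (K : ℕ) : ℝ → ℝ :=
  fun t => -(((K : ℝ) + 9) * (((K : ℝ) + 8) * (((K : ℝ) + 7) * M t ^ (K + 6))))
noncomputable def G4 (K : ℕ) : ℝ → ℝ :=
  fun t => ((K : ℝ) + 9) * (((K : ℝ) + 8) * (((K : ℝ) + 7) * (((K : ℝ) + 6) * M t ^ (K + 5))))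
noncomputable def Gpsi (K : ℕ) : ℝ → ℝ := fun t => -(1 / (2 * ((K : ℝ) + 10))) * M t ^ (K + 10)
noncomputable def Gpsi' (K : ℕ) : ℝ → ℝ := fun t => (1 / 2) * M t ^ (K + 9)

variable {K : ℕ}

lemma hG0 (t : ℝ) : HasDerivAt (G0 K) (G1 K t) t := by
  have e1 : K + 9 = K + 8 + 1 := by omega
  have h := hasDerivAt_Mpow (K + 8) (by omega) t
  unfold G0 G1; rw [e1]
  convert h using 1
  push_cast; ring

lemma hG1 (t : ℝ) : HasDerivAt (G1 K) (G2 K t) t := by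
  have hfun : G1 K = fun t => -(((K : ℝ) + 9)) * M t ^ (K + 7 + 1) := by
    funext t; unfold G1; rw [show K + 8 = K + 7 + 1 from by omega]; ring
  rw [hfun]
  have h := (hasDerivAt_Mpow (K + 7) (by omega) t).const_mul (-(((K : ℝ) + 9)))
  refine h.congr_deriv ?_
  unfold G2; push_cast; ring

lemma hG2 (t : ℝ) : HasDerivAt (G2 K) (G3 K t) t := by
  have hfun : G2 K = fun t => (((K : ℝ) + 9) * ((K : ℝ) + 8)) * M t ^ (K + 6 + 1) := by
    funext t; unfold G2; rw [show K + 7 = K + 6 + 1 from by omega]; ring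
  rw [hfun]
  have h := (hasDerivAt_Mpow (K + 6) (by omega) t).const_mul (((K : ℝ) + 9) * ((K : ℝ) + 8))
  refine h.congr_deriv ?_
  unfold G3; push_cast; ring

lemma hG3 (t : ℝ) : HasDerivAt (G3 K) (G4 K t) t := by
  have hfun : G3 K = fun t =>
      (-(((K : ℝ) + 9) * ((K : ℝ) + 8) * ((K : ℝ) + 7))) * M t ^ (K + 5 + 1) := by
    funext t; unfold G3; rw [show K + 6 = K + 5 + 1 from by omega]; ring
  rw [hfun]
  have h := (hasDerivAt_Mpow (K + 5) (by omega) t).const_mul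
    (-(((K : ℝ) + 9) * ((K : ℝ) + 8) * ((K : ℝ) + 7)))
  refine h.congr_deriv ?_
  unfold G4; push_cast; ring

lemma hGpsi (t : ℝ) : HasDerivAt (Gpsi K) (Gpsi' K t) t := by
  have hfun : Gpsi K = fun t => (-(1 / (2 * ((K : ℝ) + 10)))) * M t ^ (K + 9 + 1) := by
    funext t; unfold Gpsi; rw [show K + 10 = K + 9 + 1 from by omega]
  rw [hfun]
  have h := (hasDerivAt_Mpow (K + 9) (by omega) t).const_mul (-(1 / (2 * ((K : ℝ) + 10))))
  refine h.congr_deriv ?_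
  unfold Gpsi'
  have : ((K : ℝ) + 10) ≠ 0 := by positivity
  push_cast; field_simp; ring

lemma continuous_Mpow (k : ℕ) : Continuous fun t => M t ^ k := continuous_M.pow k

lemma continuous_G0 : Continuous (G0 K) := (continuous_Mpow _)
lemma continuous_G1 : Continuous (G1 K) := (continuous_const.mul (continuous_Mpow _)).neg
lemma continuous_G2 : Continuous (G2 K) :=
  continuous_const.mul (continuous_const.mul (continuous_Mpow _))
lemma continuous_G3 : Continuous (G3 K) :=
  (continuous_const.mul (continuous_const.mul (continuous_const.mul (continuous_Mpow _)))).neg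
lemma continuous_G4 : Continuous (G4 K) :=
  continuous_const.mul (continuous_const.mul (continuous_const.mul
    (continuous_const.mul (continuous_Mpow _))))

/-- coefficient bound helper -/
lemma CB_pos : (0 : ℝ) < ((K : ℝ) + 9) ^ 4 := by positivity

lemma abs_G1_le {t : ℝ} (ht : 0 ≤ t) : |G1 K t| ≤ ((K : ℝ) + 9) ^ 4 * M t ^ (K + 5) := by
  have hM : M t ^ (K + 8) ≤ M t ^ (K + 5) :=
    pow_le_pow_of_le_one (M_nonneg t) (M_le_one ht) (by omega)
  have h0 : (0 : ℝ) ≤ (K : ℝ) := Nat.cast_nonneg K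
  have : |G1 K t| = ((K : ℝ) + 9) * M t ^ (K + 8) := by
    unfold G1
    rw [abs_neg, abs_mul, abs_of_nonneg (by linarith : (0:ℝ) ≤ (K : ℝ) + 9),
      abs_of_nonneg (pow_nonneg (M_nonneg t) _)]
  rw [this]
  calc ((K : ℝ) + 9) * M t ^ (K + 8) ≤ ((K : ℝ) + 9) * M t ^ (K + 5) := by gcongr
    _ ≤ ((K : ℝ) + 9) ^ 4 * M t ^ (K + 5) := by
        gcongr <;> first | exact hM | exact pow_nonneg (M_nonneg t) _ | exact pow_le_pow_right₀ (by linarith) (by norm_num) | exact le_self_pow₀ (by linarith) (by norm_num) | linarith | norm_num | exact mul_nonneg (by linarith) (pow_nonneg (M_nonneg t) _) | exact mul_nonneg (by linarith) (mul_nonneg (by linarith) (pow_nonneg (M_nonneg t) _))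

lemma abs_G2_le {t : ℝ} (ht : 0 ≤ t) : |G2 K t| ≤ ((K : ℝ) + 9) ^ 4 * M t ^ (K + 5) := by
  have hM : M t ^ (K + 7) ≤ M t ^ (K + 5) :=
    pow_le_pow_of_le_one (M_nonneg t) (M_le_one ht) (by omega)
  have h0 : (0 : ℝ) ≤ (K : ℝ) := Nat.cast_nonneg K
  have : |G2 K t| = ((K : ℝ) + 9) * (((K : ℝ) + 8) * M t ^ (K + 7)) := by
    unfold G2
    rw [abs_mul, abs_mul, abs_of_nonneg (by linarith : (0:ℝ) ≤ (K : ℝ) + 9),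
      abs_of_nonneg (by linarith : (0:ℝ) ≤ (K : ℝ) + 8),
      abs_of_nonneg (pow_nonneg (M_nonneg t) _)]
  rw [this]
  calc ((K : ℝ) + 9) * (((K : ℝ) + 8) * M t ^ (K + 7))
      ≤ ((K : ℝ) + 9) * (((K : ℝ) + 9) * M t ^ (K + 5)) := by
        gcongr <;> first | exact hM | exact pow_nonneg (M_nonneg t) _ | exact pow_le_pow_right₀ (by linarith) (by norm_num) | exact le_self_pow₀ (by linarith) (by norm_num) | linarith | norm_num | exact mul_nonneg (by linarith) (pow_nonneg (M_nonneg t) _) | exact mul_nonneg (by linarith) (mul_nonneg (by linarith) (pow_nonneg (M_nonneg t) _))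
    _ = ((K : ℝ) + 9) ^ 2 * M t ^ (K + 5) := by ring
    _ ≤ ((K : ℝ) + 9) ^ 4 * M t ^ (K + 5) := by
        gcongr <;> first | exact hM | exact pow_nonneg (M_nonneg t) _ | exact pow_le_pow_right₀ (by linarith) (by norm_num) | exact le_self_pow₀ (by linarith) (by norm_num) | linarith | norm_num | exact mul_nonneg (by linarith) (pow_nonneg (M_nonneg t) _) | exact mul_nonneg (by linarith) (mul_nonneg (by linarith) (pow_nonneg (M_nonneg t) _))

lemma abs_G3_le {t : ℝ} (ht : 0 ≤ t) : |G3 K t| ≤ ((K : ℝ) + 9) ^ 4 * M t ^ (K + 5) := by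
  have hM : M t ^ (K + 6) ≤ M t ^ (K + 5) :=
    pow_le_pow_of_le_one (M_nonneg t) (M_le_one ht) (by omega)
  have h0 : (0 : ℝ) ≤ (K : ℝ) := Nat.cast_nonneg K
  have : |G3 K t| = ((K : ℝ) + 9) * (((K : ℝ) + 8) * (((K : ℝ) + 7) * M t ^ (K + 6))) := by
    unfold G3
    rw [abs_neg, abs_mul, abs_mul, abs_mul,
      abs_of_nonneg (by linarith : (0:ℝ) ≤ (K : ℝ) + 9),
      abs_of_nonneg (by linarith : (0:ℝ) ≤ (K : ℝ) + 8),
      abs_of_nonneg (by linarith : (0:ℝ) ≤ (K : ℝ) + 7),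
      abs_of_nonneg (pow_nonneg (M_nonneg t) _)]
  rw [this]
  have hMn : (0:ℝ) ≤ M t ^ (K + 5) := pow_nonneg (M_nonneg t) _
  calc ((K : ℝ) + 9) * (((K : ℝ) + 8) * (((K : ℝ) + 7) * M t ^ (K + 6)))
      ≤ ((K : ℝ) + 9) * (((K : ℝ) + 9) * (((K : ℝ) + 9) * M t ^ (K + 5))) := by
        refine mul_le_mul_of_nonneg_left ?_ (by linarith)
        refine mul_le_mul (by linarith) ?_ (mul_nonneg (by linarith)
          (pow_nonneg (M_nonneg t) _)) (by linarith)
        exact mul_le_mul (by linarith) hM (pow_nonneg (M_nonneg t) _) (by linarith)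
    _ = ((K : ℝ) + 9) ^ 3 * M t ^ (K + 5) := by ring
    _ ≤ ((K : ℝ) + 9) ^ 4 * M t ^ (K + 5) := by
        gcongr <;> first | exact hM | exact pow_nonneg (M_nonneg t) _ | exact pow_le_pow_right₀ (by linarith) (by norm_num) | exact le_self_pow₀ (by linarith) (by norm_num) | linarith | norm_num | exact mul_nonneg (by linarith) (pow_nonneg (M_nonneg t) _) | exact mul_nonneg (by linarith) (mul_nonneg (by linarith) (pow_nonneg (M_nonneg t) _))

lemma abs_G4_le {t : ℝ} (ht : 0 ≤ t) : |G4 K t| ≤ ((K : ℝ) + 9) ^ 4 * M t ^ (K + 5) := by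
  have h0 : (0 : ℝ) ≤ (K : ℝ) := Nat.cast_nonneg K
  have : |G4 K t| =
      ((K : ℝ) + 9) * (((K : ℝ) + 8) * (((K : ℝ) + 7) * (((K : ℝ) + 6) * M t ^ (K + 5)))) := by
    unfold G4
    rw [abs_mul, abs_mul, abs_mul, abs_mul,
      abs_of_nonneg (by linarith : (0:ℝ) ≤ (K : ℝ) + 9),
      abs_of_nonneg (by linarith : (0:ℝ) ≤ (K : ℝ) + 8),
      abs_of_nonneg (by linarith : (0:ℝ) ≤ (K : ℝ) + 7),
      abs_of_nonneg (by linarith : (0:ℝ) ≤ (K : ℝ) + 6),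
      abs_of_nonneg (pow_nonneg (M_nonneg t) _)]
  rw [this]
  have hMn : (0:ℝ) ≤ M t ^ (K + 5) := pow_nonneg (M_nonneg t) _
  calc ((K : ℝ) + 9) * (((K : ℝ) + 8) * (((K : ℝ) + 7) * (((K : ℝ) + 6) * M t ^ (K + 5))))
      ≤ ((K : ℝ) + 9) * (((K : ℝ) + 9) * (((K : ℝ) + 9) * (((K : ℝ) + 9) * M t ^ (K + 5)))) := by
        refine mul_le_mul_of_nonneg_left ?_ (by linarith)
        refine mul_le_mul (by linarith) ?_ (mul_nonneg (by linarith) (mul_nonneg (by linarith)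
          hMn)) (by linarith)
        refine mul_le_mul (by linarith) ?_ (mul_nonneg (by linarith) hMn) (by linarith)
        exact mul_le_mul (by linarith) le_rfl hMn (by linarith)
    _ = ((K : ℝ) + 9) ^ 4 * M t ^ (K + 5) := by ring

lemma G1_eq_zero {t : ℝ} (ht : 1 ≤ t) : G1 K t = 0 := by
  unfold G1; rw [M_eq_zero ht]; simp [zero_pow (by omega : K + 8 ≠ 0)]
lemma G2_eq_zero {t : ℝ} (ht : 1 ≤ t) : G2 K t = 0 := by
  unfold G2; rw [M_eq_zero ht]; simp [zero_pow (by omega : K + 7 ≠ 0)]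
lemma G3_eq_zero {t : ℝ} (ht : 1 ≤ t) : G3 K t = 0 := by
  unfold G3; rw [M_eq_zero ht]; simp [zero_pow (by omega : K + 6 ≠ 0)]
lemma G4_eq_zero {t : ℝ} (ht : 1 ≤ t) : G4 K t = 0 := by
  unfold G4; rw [M_eq_zero ht]; simp [zero_pow (by omega : K + 5 ≠ 0)]

end Weights

/-! ### Laplacians of the weight -/

section HFun

noncomputable def H1 (K n : ℕ) : ℝ → ℝ := fun t => 4 * (t * G2 K t) + 2 * (n : ℝ) * G1 K t
noncomputable def H2 (K n : ℕ) : ℝ → ℝ :=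
  fun t => (4 + 2 * (n : ℝ)) * G2 K t + 4 * (t * G3 K t)
noncomputable def H3 (K n : ℕ) : ℝ → ℝ :=
  fun t => (8 + 2 * (n : ℝ)) * G3 K t + 4 * (t * G4 K t)
noncomputable def LL (K n : ℕ) : ℝ → ℝ :=
  fun t => 4 * (t * H3 K n t) + 2 * (n : ℝ) * H2 K n t

variable {K n : ℕ}

lemma hH1 (t : ℝ) : HasDerivAt (H1 K n) (H2 K n t) t := by
  have a1 : HasDerivAt (fun t : ℝ => 4 * (t * G2 K t))
      (4 * (1 * G2 K t + t * G3 K t)) t := ((hasDerivAt_id t).mul (hG2 t)).const_mul 4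
  have a2 : HasDerivAt (fun t : ℝ => 2 * (n : ℝ) * G1 K t)
      (2 * (n : ℝ) * G2 K t) t := (hG1 t).const_mul _
  have := a1.add a2
  refine this.congr_deriv ?_
  unfold H2; ring

lemma hH2 (t : ℝ) : HasDerivAt (H2 K n) (H3 K n t) t := by
  have a1 : HasDerivAt (fun t : ℝ => (4 + 2 * (n : ℝ)) * G2 K t)
      ((4 + 2 * (n : ℝ)) * G3 K t) t := (hG2 t).const_mul _
  have a2 : HasDerivAt (fun t : ℝ => 4 * (t * G3 K t))
      (4 * (1 * G3 K t + t * G4 K t)) t := ((hasDerivAt_id t).mul (hG3 t)).const_mul 4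
  have := a1.add a2
  refine this.congr_deriv ?_
  unfold H3; ring

lemma continuous_H2 : Continuous (H2 K n) :=
  (continuous_const.mul continuous_G2).add
    (continuous_const.mul (continuous_id.mul continuous_G3))
lemma continuous_H3 : Continuous (H3 K n) :=
  (continuous_const.mul continuous_G3).add
    (continuous_const.mul (continuous_id.mul continuous_G4))
lemma continuous_LL : Continuous (LL K n) :=
  (continuous_const.mul (continuous_id.mul continuous_H3)).add
    (continuous_const.mul continuous_H2)

lemma H1_eq_zero {t : ℝ} (ht : 1 ≤ t) : H1 K n t = 0 := by
  unfold H1; rw [G1_eq_zero ht, G2_eq_zero ht]; ring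
lemma H2_eq_zero {t : ℝ} (ht : 1 ≤ t) : H2 K n t = 0 := by
  unfold H2; rw [G2_eq_zero ht, G3_eq_zero ht]; ring
lemma H3_eq_zero {t : ℝ} (ht : 1 ≤ t) : H3 K n t = 0 := by
  unfold H3; rw [G3_eq_zero ht, G4_eq_zero ht]; ring
lemma LL_eq_zero {t : ℝ} (ht : 1 ≤ t) : LL K n t = 0 := by
  unfold LL; rw [H2_eq_zero ht, H3_eq_zero ht]; ring

lemma abs_H1_le {t : ℝ} (ht : 0 ≤ t) :
    |H1 K n t| ≤ (4 + 2 * (n : ℝ)) * ((K : ℝ) + 9) ^ 4 * M t ^ (K + 5) := by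
  rcases le_or_gt 1 t with h1 | h1
  · rw [H1_eq_zero h1]
    simp only [abs_zero]
    exact mul_nonneg (by positivity) (pow_nonneg (M_nonneg t) _)
  · have hM5 : (0:ℝ) ≤ M t ^ (K + 5) := pow_nonneg (M_nonneg t) _
    have b1 := abs_G1_le (K := K) ht
    have b2 := abs_G2_le (K := K) ht
    have habs : |H1 K n t| ≤ 4 * (t * |G2 K t|) + 2 * (n : ℝ) * |G1 K t| := by
      unfold H1
      calc |4 * (t * G2 K t) + 2 * (n : ℝ) * G1 K t|
          ≤ |4 * (t * G2 K t)| + |2 * (n : ℝ) * G1 K t| := abs_add_le _ _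
        _ = 4 * (t * |G2 K t|) + 2 * (n : ℝ) * |G1 K t| := by
            rw [abs_mul, abs_mul, abs_mul, abs_mul]
            simp [abs_of_nonneg ht, abs_of_nonneg (by positivity : (0:ℝ) ≤ (n:ℝ))]
    have ht1 : t ≤ 1 := h1.le
    have c2 : t * |G2 K t| ≤ ((K : ℝ) + 9) ^ 4 * M t ^ (K + 5) := by
      calc t * |G2 K t| ≤ 1 * |G2 K t| := by
            apply mul_le_mul_of_nonneg_right ht1 (abs_nonneg _)
        _ = |G2 K t| := one_mul _
        _ ≤ _ := b2
    calc |H1 K n t| ≤ 4 * (t * |G2 K t|) + 2 * (n : ℝ) * |G1 K t| := habs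
      _ ≤ 4 * (((K : ℝ) + 9) ^ 4 * M t ^ (K + 5)) +
          2 * (n : ℝ) * (((K : ℝ) + 9) ^ 4 * M t ^ (K + 5)) :=
          add_le_add (mul_le_mul_of_nonneg_left c2 (by norm_num))
            (mul_le_mul_of_nonneg_left b1 (by positivity))
      _ = (4 + 2 * (n : ℝ)) * ((K : ℝ) + 9) ^ 4 * M t ^ (K + 5) := by ring

lemma abs_LL_le {t : ℝ} (ht : 0 ≤ t) :
    |LL K n t| ≤ (4 * (12 + 2 * (n : ℝ)) + 2 * (n : ℝ) * (8 + 2 * (n : ℝ))) *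
      ((K : ℝ) + 9) ^ 4 * M t ^ (K + 5) := by
  rcases le_or_gt 1 t with h1 | h1
  · rw [LL_eq_zero h1]
    simp only [abs_zero]
    exact mul_nonneg (by positivity) (pow_nonneg (M_nonneg t) _)
  · have hM5 : (0:ℝ) ≤ M t ^ (K + 5) := pow_nonneg (M_nonneg t) _
    have ht1 : t ≤ 1 := h1.le
    have b2 := abs_G2_le (K := K) ht
    have b3 := abs_G3_le (K := K) ht
    have b4 := abs_G4_le (K := K) ht
    set CB := ((K : ℝ) + 9) ^ 4 with hCB
    have hCB0 : (0:ℝ) ≤ CB := by positivity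
    have e2 : |H2 K n t| ≤ (8 + 2 * (n : ℝ)) * (CB * M t ^ (K + 5)) := by
      unfold H2
      calc |(4 + 2 * (n : ℝ)) * G2 K t + 4 * (t * G3 K t)|
          ≤ |(4 + 2 * (n : ℝ)) * G2 K t| + |4 * (t * G3 K t)| := abs_add_le _ _
        _ = (4 + 2 * (n : ℝ)) * |G2 K t| + 4 * (t * |G3 K t|) := by
            rw [abs_mul, abs_mul, abs_mul]
            simp [abs_of_nonneg ht, abs_of_nonneg (by positivity : (0:ℝ) ≤ 4 + 2*(n:ℝ))]
        _ ≤ (4 + 2 * (n : ℝ)) * (CB * M t ^ (K + 5)) + 4 * (1 * (CB * M t ^ (K + 5))) := by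
            refine add_le_add (mul_le_mul_of_nonneg_left b2 (by positivity))
              (mul_le_mul_of_nonneg_left ?_ (by norm_num))
            calc t * |G3 K t| ≤ 1 * |G3 K t| :=
                  mul_le_mul_of_nonneg_right ht1 (abs_nonneg _)
              _ ≤ 1 * (CB * M t ^ (K + 5)) := by rw [one_mul, one_mul]; exact b3
        _ = (8 + 2 * (n : ℝ)) * (CB * M t ^ (K + 5)) := by ring
    have e3 : |H3 K n t| ≤ (12 + 2 * (n : ℝ)) * (CB * M t ^ (K + 5)) := by
      unfold H3
      calc |(8 + 2 * (n : ℝ)) * G3 K t + 4 * (t * G4 K t)|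
          ≤ |(8 + 2 * (n : ℝ)) * G3 K t| + |4 * (t * G4 K t)| := abs_add_le _ _
        _ = (8 + 2 * (n : ℝ)) * |G3 K t| + 4 * (t * |G4 K t|) := by
            rw [abs_mul, abs_mul, abs_mul]
            simp [abs_of_nonneg ht, abs_of_nonneg (by positivity : (0:ℝ) ≤ 8 + 2*(n:ℝ))]
        _ ≤ (8 + 2 * (n : ℝ)) * (CB * M t ^ (K + 5)) + 4 * (1 * (CB * M t ^ (K + 5))) := by
            refine add_le_add (mul_le_mul_of_nonneg_left b3 (by positivity))
              (mul_le_mul_of_nonneg_left ?_ (by norm_num))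
            calc t * |G4 K t| ≤ 1 * |G4 K t| :=
                  mul_le_mul_of_nonneg_right ht1 (abs_nonneg _)
              _ ≤ 1 * (CB * M t ^ (K + 5)) := by rw [one_mul, one_mul]; exact b4
        _ = (12 + 2 * (n : ℝ)) * (CB * M t ^ (K + 5)) := by ring
    calc |LL K n t| ≤ |4 * (t * H3 K n t)| + |2 * (n : ℝ) * H2 K n t| := abs_add_le _ _
      _ = 4 * (t * |H3 K n t|) + 2 * (n : ℝ) * |H2 K n t| := by
          rw [abs_mul, abs_mul, abs_mul, abs_mul]
          simp [abs_of_nonneg ht, abs_of_nonneg (by positivity : (0:ℝ) ≤ (n:ℝ))]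
      _ ≤ 4 * (1 * ((12 + 2 * (n : ℝ)) * (CB * M t ^ (K + 5)))) +
          2 * (n : ℝ) * ((8 + 2 * (n : ℝ)) * (CB * M t ^ (K + 5))) := by
          refine add_le_add (mul_le_mul_of_nonneg_left ?_ (by norm_num))
            (mul_le_mul_of_nonneg_left e2 (by positivity))
          calc t * |H3 K n t| ≤ 1 * |H3 K n t| :=
                mul_le_mul_of_nonneg_right ht1 (abs_nonneg _)
            _ ≤ 1 * ((12 + 2 * (n : ℝ)) * (CB * M t ^ (K + 5))) := by
                rw [one_mul, one_mul]; exact e3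
      _ = (4 * (12 + 2 * (n : ℝ)) + 2 * (n : ℝ) * (8 + 2 * (n : ℝ))) * CB * M t ^ (K + 5) := by
          ring

end HFun

/-! ### Weights on Euclidean space -/

section EWeights

variable {n : ℕ} (K : ℕ)

noncomputable def rho : EuclideanSpace ℝ (Fin n) → ℝ := fun y => G0 K (‖y‖ ^ 2)
noncomputable def psi : EuclideanSpace ℝ (Fin n) → ℝ := fun y => Gpsi K (‖y‖ ^ 2)
noncomputable def lrho (n : ℕ) : EuclideanSpace ℝ (Fin n) → ℝ := fun y => H1 K n (‖y‖ ^ 2)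

variable {K}

lemma rho_nonneg (y : EuclideanSpace ℝ (Fin n)) : 0 ≤ rho K y :=
  pow_nonneg (M_nonneg _) _

lemma rho_continuous : Continuous (rho (n := n) K) :=
  continuous_G0.comp ((continuous_norm).pow 2)

lemma rho_cs : HasCompactSupport (rho (n := n) K) :=
  radial_hasCompactSupport _ fun t ht => by
    unfold G0; rw [M_eq_zero ht]; exact zero_pow (by omega)

lemma rho_diff : Differentiable ℝ (rho (n := n) K) :=
  radial_differentiable _ (G1 K) hG0

lemma pd_rho (i : Fin n) : pd i (rho K) = fun y => 2 * G1 K (‖y‖ ^ 2) * y i :=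
  radial_pd _ _ hG0 i

lemma pd_rho_diff (i : Fin n) : Differentiable ℝ (pd i (rho K)) := by
  rw [pd_rho i]
  exact fun y => (radial_pd_hasFDerivAt (G1 K) (G2 K) hG1 i y).differentiableAt

lemma pd_rho_continuous (i : Fin n) : Continuous (pd i (rho K)) :=
  (pd_rho_diff i).continuous

lemma pd_pd_rho_continuous (i : Fin n) : Continuous (pd i (pd i (rho K))) := by
  have he : pd i (pd i (rho (n := n) K)) =
      fun y => 2 * G1 K (‖y‖ ^ 2) + 4 * G2 K (‖y‖ ^ 2) * y i ^ 2 :=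
    funext fun y => radial_pd_pd _ _ _ hG0 hG1 i y
  rw [he]
  have hc1 : Continuous fun y : EuclideanSpace ℝ (Fin n) => G1 K (‖y‖ ^ 2) :=
    continuous_G1.comp (continuous_norm.pow 2)
  have hc2 : Continuous fun y : EuclideanSpace ℝ (Fin n) => G2 K (‖y‖ ^ 2) :=
    continuous_G2.comp (continuous_norm.pow 2)
  exact (continuous_const.mul hc1).add ((continuous_const.mul hc2).mul
    ((EuclideanSpace.proj (𝕜 := ℝ) i).continuous.pow 2))

lemma lap_rho : lap (rho K) = lrho K n :=
  funext fun y => by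
    unfold rho
    rw [radial_lap _ (G1 K) (G2 K) hG0 hG1 y]
    unfold lrho H1; ring

lemma lrho_continuous : Continuous (lrho K n) :=
  ((continuous_const.mul ((continuous_norm.pow 2).mul
    (continuous_G2.comp (continuous_norm.pow 2)))).add
    (continuous_const.mul (continuous_G1.comp (continuous_norm.pow 2))))

lemma lrho_cs : HasCompactSupport (lrho K n) :=
  radial_hasCompactSupport _ fun t ht => H1_eq_zero ht

lemma lrho_diff : Differentiable ℝ (lrho K n) :=
  radial_differentiable _ (H2 K n) hH1

lemma pd_lrho (i : Fin n) : pd i (lrho K n) = fun y => 2 * H2 K n (‖y‖ ^ 2) * y i :=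
  radial_pd _ _ hH1 i

lemma pd_lrho_diff (i : Fin n) : Differentiable ℝ (pd i (lrho K n)) := by
  rw [pd_lrho i]
  exact fun y => (radial_pd_hasFDerivAt (H2 K n) (H3 K n) hH2 i y).differentiableAt

lemma pd_lrho_continuous (i : Fin n) : Continuous (pd i (lrho K n)) :=
  (pd_lrho_diff i).continuous

lemma pd_pd_lrho_continuous (i : Fin n) : Continuous (pd i (pd i (lrho K n))) := by
  have he : pd i (pd i (lrho K n)) =
      fun y => 2 * H2 K n (‖y‖ ^ 2) + 4 * H3 K n (‖y‖ ^ 2) * y i ^ 2 :=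
    funext fun y => radial_pd_pd _ _ _ hH1 hH2 i y
  rw [he]
  have hc1 : Continuous fun y : EuclideanSpace ℝ (Fin n) => H2 K n (‖y‖ ^ 2) :=
    continuous_H2.comp (continuous_norm.pow 2)
  have hc2 : Continuous fun y : EuclideanSpace ℝ (Fin n) => H3 K n (‖y‖ ^ 2) :=
    continuous_H3.comp (continuous_norm.pow 2)
  exact (continuous_const.mul hc1).add ((continuous_const.mul hc2).mul
    ((EuclideanSpace.proj (𝕜 := ℝ) i).continuous.pow 2))

lemma lap_lrho : lap (lrho K n) = fun y => LL K n (‖y‖ ^ 2) :=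
  funext fun y => by
    unfold lrho
    rw [radial_lap _ (H2 K n) (H3 K n) hH1 hH2 y]
    unfold LL; ring

lemma psi_nonpos (y : EuclideanSpace ℝ (Fin n)) : psi K y ≤ 0 := by
  unfold psi Gpsi
  have h1 : (0:ℝ) ≤ M (‖y‖ ^ 2) ^ (K + 10) := pow_nonneg (M_nonneg _) _
  have h2 : (0:ℝ) < 2 * ((K : ℝ) + 10) := by positivity
  have : (0:ℝ) ≤ 1 / (2 * ((K : ℝ) + 10)) := by positivity
  nlinarith

lemma psi_diff : Differentiable ℝ (psi (n := n) K) :=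
  radial_differentiable _ (Gpsi' K) hGpsi

lemma psi_cs : HasCompactSupport (psi (n := n) K) :=
  radial_hasCompactSupport _ fun t ht => by
    unfold Gpsi; rw [M_eq_zero ht, zero_pow (by omega)]; ring

lemma pd_psi (i : Fin n) : pd i (psi K) = fun y => rho K y * y i := by
  unfold psi
  rw [radial_pd _ _ hGpsi i]
  funext y
  unfold Gpsi' rho G0
  ring

lemma pd_psi_diff (i : Fin n) : Differentiable ℝ (pd i (psi K)) := by
  unfold psi
  rw [radial_pd _ _ hGpsi i]
  refine fun y => (radial_pd_hasFDerivAt (Gpsi' K) (fun t => (1/2) * G1 K t)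
    (fun t => ?_) i y).differentiableAt
  have h := (hG0 (K := K) t).const_mul (1/2 : ℝ)
  unfold G0 at h
  unfold Gpsi'
  exact h

lemma pd_psi_cs (i : Fin n) : HasCompactSupport (pd i (psi K)) := by
  rw [pd_psi i]
  exact rho_cs.mul_right

lemma pd_psi_continuous (i : Fin n) : Continuous (pd i (psi K)) :=
  (pd_psi_diff i).continuous

lemma rho_eq_zero_of_one_le {y : EuclideanSpace ℝ (Fin n)} (hy : 1 ≤ ‖y‖) : rho K y = 0 := by
  unfold rho G0
  rw [M_eq_zero (by nlinarith : (1:ℝ) ≤ ‖y‖ ^ 2)]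
  exact zero_pow (by omega)

lemma kappa_pos : 0 < ∫ y : EuclideanSpace ℝ (Fin n), rho K y := by
  rw [integral_pos_iff_support_of_nonneg rho_nonneg
    (rho_continuous.integrable_of_hasCompactSupport rho_cs)]
  have hsub : Metric.ball (0 : EuclideanSpace ℝ (Fin n)) 1 ⊆ Function.support (rho K) := by
    intro y hy
    have h1 : ‖y‖ < 1 := by simpa using hy
    have h2 : 0 < M (‖y‖ ^ 2) := by
      unfold M
      have : ‖y‖ ^ 2 < 1 := by nlinarith [norm_nonneg y]
      rw [lt_max_iff]; left; linarith
    exact ne_of_gt (pow_pos h2 _)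
  calc (0 : ENNReal) < volume (Metric.ball (0 : EuclideanSpace ℝ (Fin n)) 1) :=
        Metric.measure_ball_pos volume 0 one_pos
    _ ≤ volume (Function.support (rho (n := n) K)) := measure_mono hsub

end EWeights

/-! ### Linear algebra helper -/

lemma euclid_eq_sum_single {n : ℕ} (y : EuclideanSpace ℝ (Fin n)) :
    y = ∑ i, y i • EuclideanSpace.single i (1 : ℝ) := by
  ext j
  rw [WithLp.ofLp_sum, Finset.sum_apply]
  simp [EuclideanSpace.single_apply]

lemma clm_apply_eq_sum {n : ℕ} (L : EuclideanSpace ℝ (Fin n) →L[ℝ] ℝ)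
    (y : EuclideanSpace ℝ (Fin n)) :
    L y = ∑ i, y i * L (EuclideanSpace.single i 1) := by
  conv_lhs => rw [euclid_eq_sum_single y]
  rw [map_sum]
  simp [smul_eq_mul]

lemma integ_mul_cs' {n : ℕ} {f g : EuclideanSpace ℝ (Fin n) → ℝ} (hf : Continuous f)
    (hg : Continuous g) (hfs : HasCompactSupport f) :
    Integrable (fun y => f y * g y) volume :=
  (hf.mul hg).integrable_of_hasCompactSupport (hfs.mul_right)

/-! ### Monotonicity of weighted means for subharmonic functions -/

lemma mean_mono {n K : ℕ} (v : EuclideanSpace ℝ (Fin n) → ℝ) (hv : ContDiff ℝ 2 v)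
    (hsub : ∀ z, 0 ≤ lap v z) (x0 : EuclideanSpace ℝ (Fin n)) {R : ℝ} (hR : 0 ≤ R) :
    v x0 * ∫ y : EuclideanSpace ℝ (Fin n), rho K y ≤
      ∫ y : EuclideanSpace ℝ (Fin n), v (x0 + R • y) * rho K y := by
  have hvd : Differentiable ℝ v := hv.differentiable (by norm_num)
  have hvdc : Continuous (fderiv ℝ v) := (hv.fderiv_right (m := 1) (by norm_num)).continuous
  set m : ℝ → ℝ := fun t => ∫ y : EuclideanSpace ℝ (Fin n), v (x0 + t • y) * rho K y
    with hm_def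
  have hFcont : ∀ t : ℝ,
      Continuous fun y : EuclideanSpace ℝ (Fin n) => v (x0 + t • y) * rho K y := fun t =>
    ((hvd.continuous).comp (continuous_const.add (continuous_id.const_smul t))).mul
      rho_continuous
  -- differentiability of m
  have hderiv : ∀ t0 : ℝ,
      HasDerivAt m (∫ y : EuclideanSpace ℝ (Fin n),
        fderiv ℝ v (x0 + t0 • y) y * rho K y) t0 := by
    intro t0
    obtain ⟨C, hC⟩ := (isCompact_closedBall x0 (|t0| + 1)).exists_bound_of_continuousOn
      (hvdc.continuousOn)
    have hC0 : 0 ≤ C :=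
      le_trans (norm_nonneg _) (hC x0 (Metric.mem_closedBall_self (by positivity)))
    have hkey := hasDerivAt_integral_of_dominated_loc_of_deriv_le
      (F := fun t (y : EuclideanSpace ℝ (Fin n)) => v (x0 + t • y) * rho K y)
      (F' := fun t (y : EuclideanSpace ℝ (Fin n)) => fderiv ℝ v (x0 + t • y) y * rho K y)
      (x₀ := t0) (s := Metric.ball t0 1) (bound := fun y => C * rho K y) (μ := volume)
        (Metric.ball_mem_nhds t0 one_pos)
      (Filter.Eventually.of_forall fun t => (hFcont t).aestronglyMeasurable)
      ((hFcont t0).integrable_of_hasCompactSupport rho_cs.mul_left)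
      ?_ ?_ ?_ ?_
    · exact hkey.2
    · -- measurability of F' t0
      apply Continuous.aestronglyMeasurable
      exact ((hvdc.comp (continuous_const.add (continuous_id.const_smul t0))).clm_apply
        continuous_id).mul rho_continuous
    · -- bound
      apply Filter.Eventually.of_forall
      intro y t ht
      show ‖fderiv ℝ v (x0 + t • y) y * rho K y‖ ≤ C * rho K y
      rcases le_or_gt 1 ‖y‖ with h1 | h1
      · rw [rho_eq_zero_of_one_le h1]
        simp
      · have hz : x0 + t • y ∈ Metric.closedBall x0 (|t0| + 1) := by
          rw [Metric.mem_closedBall, dist_eq_norm, add_sub_cancel_left, norm_smul]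
          have ht' : |t| ≤ |t0| + 1 := by
            have := abs_sub_abs_le_abs_sub t t0
            have h2 : |t - t0| < 1 := by simpa [Real.dist_eq] using ht
            linarith
          have hy1 : ‖y‖ ≤ 1 := h1.le
          calc ‖t‖ * ‖y‖ ≤ (|t0| + 1) * 1 := by
                apply mul_le_mul (by simpa using ht') hy1 (norm_nonneg y) (by positivity)
            _ = |t0| + 1 := mul_one _
        calc ‖fderiv ℝ v (x0 + t • y) y * rho K y‖
            = ‖fderiv ℝ v (x0 + t • y) y‖ * rho K y := by
              rw [norm_mul, Real.norm_of_nonneg (rho_nonneg y)]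
          _ ≤ (‖fderiv ℝ v (x0 + t • y)‖ * ‖y‖) * rho K y :=
              mul_le_mul_of_nonneg_right ((fderiv ℝ v _).le_opNorm y) (rho_nonneg y)
          _ ≤ (C * 1) * rho K y := by
              apply mul_le_mul_of_nonneg_right _ (rho_nonneg y)
              exact mul_le_mul (hC _ hz) h1.le (norm_nonneg y) hC0
          _ = C * rho K y := by ring
    · exact (continuous_const.mul rho_continuous).integrable_of_hasCompactSupport
        rho_cs.mul_left
    · -- differentiability in t
      apply Filter.Eventually.of_forall
      intro y t ht
      have h1 : HasDerivAt (fun t : ℝ => x0 + t • y) y t := by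
        have h := (hasDerivAt_id t).smul_const y
        simpa using h.const_add x0
      have h2 : HasDerivAt (fun t : ℝ => v (x0 + t • y)) (fderiv ℝ v (x0 + t • y) y) t :=
        (hvd _).hasFDerivAt.comp_hasDerivAt t h1
      exact h2.mul_const _
  -- nonnegativity of the derivative for t > 0
  have hnn : ∀ t : ℝ, 0 < t →
      0 ≤ ∫ y : EuclideanSpace ℝ (Fin n), fderiv ℝ v (x0 + t • y) y * rho K y := by
    intro t ht
    have hvA : ContDiff ℝ 2 (fun y : EuclideanSpace ℝ (Fin n) => v (x0 + t • y)) :=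
      hv.comp (contDiff_affine x0 t)
    have hvAd : Differentiable ℝ (fun y : EuclideanSpace ℝ (Fin n) => v (x0 + t • y)) :=
      hvA.differentiable (by norm_num)
    have hpdA : ∀ i : Fin n,
        Differentiable ℝ (pd i fun y : EuclideanSpace ℝ (Fin n) => v (x0 + t • y)) := fun i =>
      ((hvA.fderiv_right (m := 1) (by norm_num)).clm_apply contDiff_const).differentiable one_ne_zero
    have hpdAc : ∀ i : Fin n,
        Continuous (pd i fun y : EuclideanSpace ℝ (Fin n) => v (x0 + t • y)) := fun i =>
      (hpdA i).continuous
    have hpdpdAc : ∀ i : Fin n,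
        Continuous (pd i (pd i fun y : EuclideanSpace ℝ (Fin n) => v (x0 + t • y))) := by
      intro i
      have h1 : ContDiff ℝ (1 : ℕ) (pd i fun y : EuclideanSpace ℝ (Fin n) => v (x0 + t • y)) :=
        contDiff_pd (by exact_mod_cast hvA) i
      exact (contDiff_pd h1 i).continuous
    have hident : ∀ y : EuclideanSpace ℝ (Fin n),
        t * (fderiv ℝ v (x0 + t • y) y * rho K y) =
        ∑ i, pd i (psi K) y * pd i (fun z => v (x0 + t • z)) y := by
      intro y
      have hterm : ∀ i : Fin n, pd i (psi K) y * pd i (fun z => v (x0 + t • z)) y =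
          t * (rho K y * (y i * fderiv ℝ v (x0 + t • y) (EuclideanSpace.single i 1))) := by
        intro i
        rw [congrFun (pd_psi i) y, congrFun (pd_comp_affine x0 t v hvd i) y]
        show rho K y * y i * (t * fderiv ℝ v (x0 + t • y) (EuclideanSpace.single i 1)) = _
        ring
      rw [Finset.sum_congr rfl fun i _ => hterm i, ← Finset.mul_sum, ← Finset.mul_sum,
        ← clm_apply_eq_sum]
      ring
    have hibp : ∀ i : Fin n,
        ∫ y : EuclideanSpace ℝ (Fin n), pd i (psi K) y * pd i (fun z => v (x0 + t • z)) y =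
        - ∫ y : EuclideanSpace ℝ (Fin n), psi K y *
            pd i (pd i fun z => v (x0 + t • z)) y := by
      intro i
      have := ibp_once (f := psi K) (g := pd i fun z => v (x0 + t • z)) i
        psi_diff (hpdA i)
        (integ_mul_cs' (pd_psi_continuous i) (hpdAc i) (pd_psi_cs i))
        (integ_mul_cs' (psi_diff.continuous) (hpdpdAc i) psi_cs)
        (integ_mul_cs' (psi_diff.continuous) (hpdAc i) psi_cs)
      rw [this, neg_neg]
    have hsum : t * ∫ y : EuclideanSpace ℝ (Fin n), fderiv ℝ v (x0 + t • y) y * rho K y =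
        - ∫ y : EuclideanSpace ℝ (Fin n), psi K y * lap (fun z => v (x0 + t • z)) y := by
      rw [← integral_const_mul]
      rw [integral_congr_ae (Filter.Eventually.of_forall hident)]
      rw [integral_finset_sum _ fun i _ =>
        integ_mul_cs' (pd_psi_continuous i) (hpdAc i) (pd_psi_cs i)]
      rw [Finset.sum_congr rfl fun i _ => hibp i]
      rw [Finset.sum_neg_distrib]
      congr 1
      rw [← integral_finset_sum _ fun i _ =>
        integ_mul_cs' (psi_diff.continuous) (hpdpdAc i) psi_cs]
      congr 1
      funext y
      rw [lap_eq_sum, Finset.mul_sum]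
    have hfinal : 0 ≤ - ∫ y : EuclideanSpace ℝ (Fin n),
        psi K y * lap (fun z => v (x0 + t • z)) y := by
      rw [← integral_neg]
      apply integral_nonneg
      intro y
      have h1 : lap (fun z => v (x0 + t • z)) y = t ^ 2 * lap v (x0 + t • y) :=
        lap_comp_affine x0 t v hv y
      have h2 : 0 ≤ lap (fun z => v (x0 + t • z)) y := by
        rw [h1]; exact mul_nonneg (by positivity) (hsub _)
      have := mul_nonneg (neg_nonneg.2 (psi_nonpos (K := K) y)) h2
      simpa [neg_mul] using this
    nlinarith [hsum ▸ hfinal]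
  -- monotonicity
  have hmdiff : Differentiable ℝ m := fun t => (hderiv t).differentiableAt
  have hmono : MonotoneOn m (Set.Ici (0 : ℝ)) := by
    apply monotoneOn_of_deriv_nonneg (convex_Ici 0) hmdiff.continuous.continuousOn
      (fun t _ => (hmdiff t).differentiableWithinAt)
    intro t ht
    rw [interior_Ici] at ht
    rw [(hderiv t).deriv]
    exact hnn t ht
  have h0R : m 0 ≤ m R := hmono Set.self_mem_Ici hR hR
  have hm0 : m 0 = v x0 * ∫ y : EuclideanSpace ℝ (Fin n), rho K y := by
    rw [hm_def]
    simp only [zero_smul, add_zero]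
    exact integral_const_mul _ _
  rw [← hm0]
  exact h0R

end St10

open St10 in
/-- nonnegative entire solutions of `Δ² uᵢ = |U|^{s-1} uᵢ` with
`n/(n-4) < s < (n+4)/(n-4)` are superharmonic: `-Δ uᵢ ≥ 0` everywhere. -/
theorem statement10 (n p : ℕ) (hn : 5 ≤ n) (hp : 1 ≤ p) (s : ℝ)
    (hs1 : (n : ℝ) / ((n : ℝ) - 4) < s) (hs2 : s < ((n : ℝ) + 4) / ((n : ℝ) - 4))
    (U : Fin p → EuclideanSpace ℝ (Fin n) → ℝ)
    (hnonneg : ∀ i x, 0 ≤ U i x)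
    (hC4 : ∀ i, ContDiff ℝ 4 (U i))
    (hpde : ∀ i x, bilap (U i) x = (vnorm U x) ^ (s - 1) * U i x) :
    ∀ i x, 0 ≤ -lap (U i) x := by
  by_contra hcon
  push_neg at hcon
  obtain ⟨i0, x0, hbad⟩ := hcon
  have hc : 0 < lap (U i0) x0 := by linarith [neg_neg_iff_pos.1 (by linarith : -lap (U i0) x0 < 0)]
  -- basic facts about s
  have hn5 : (5 : ℝ) ≤ (n : ℝ) := by exact_mod_cast hn
  have hs1' : 1 < s := by
    have h4 : (0 : ℝ) < (n : ℝ) - 4 := by linarith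
    have : (1 : ℝ) < (n : ℝ) / ((n : ℝ) - 4) := by
      rw [lt_div_iff₀ h4]; linarith
    linarith
  have hs0 : 0 < s := by linarith
  have hconj : s.HolderConjugate s.conjExponent := Real.HolderConjugate.conjExponent hs1'
  have hs'0 : 0 < s.conjExponent := hconj.symm.pos
  -- the solution component
  set u : EuclideanSpace ℝ (Fin n) → ℝ := U i0 with hu_def
  have hu4 : ContDiff ℝ ((4 : ℕ) : WithTop ℕ∞) u := by exact_mod_cast hC4 i0
  have hu2 : ContDiff ℝ 2 u := hu4.of_le (by exact_mod_cast (by norm_num : (2:ℕ) ≤ 4))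
  have hv2 : ContDiff ℝ 2 (lap u) := by
    have := contDiff_lap (n := n) (m := 2) (f := u) (by exact_mod_cast hu4)
    exact_mod_cast this
  have hlapv_nonneg : ∀ z, 0 ≤ lap (lap u) z := by
    intro z
    have h3 : lap (lap u) z = (vnorm U z) ^ (s - 1) * u z := hpde i0 z
    have h2 : 0 ≤ (vnorm U z) ^ (s - 1) * u z :=
      mul_nonneg (Real.rpow_nonneg (Real.sqrt_nonneg _) _) (hnonneg i0 z)
    rw [h3]
    exact h2
  have hlapvc : Continuous (lap (lap u)) := by
    have := contDiff_lap (n := n) (m := 0) (f := lap u) (by exact_mod_cast hv2)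
    exact this.continuous
  -- pointwise inequality u^s ≤ Δ²u
  have hups : ∀ z, u z ^ s ≤ lap (lap u) z := by
    intro z
    have h1 : u z ≤ vnorm U z := by
      have h2 : u z = Real.sqrt ((u z) ^ 2) := (Real.sqrt_sq (hnonneg i0 z)).symm
      rw [h2]
      exact Real.sqrt_le_sqrt (Finset.single_le_sum
        (f := fun j => U j z ^ 2) (fun j _ => sq_nonneg _) (Finset.mem_univ i0))
    have h2 : bilap u z = (vnorm U z) ^ (s - 1) * u z := hpde i0 z
    show u z ^ s ≤ bilap u z
    rw [h2]
    rcases eq_or_lt_of_le (show (0:ℝ) ≤ u z from hnonneg i0 z) with h0 | h0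
    · rw [← h0, Real.zero_rpow (by linarith : s ≠ 0), mul_zero]
    · have e1 : u z ^ s = u z ^ (s - 1) * u z := by
        have h4 := Real.rpow_add_one (ne_of_gt h0) (s - 1)
        rw [show s - 1 + 1 = s by ring] at h4
        exact h4
      rw [e1]
      apply mul_le_mul_of_nonneg_right _ (le_of_lt h0)
      exact Real.rpow_le_rpow (le_of_lt h0) h1 (by linarith)
  -- choice of the weight exponent
  obtain ⟨K, hK⟩ := exists_nat_ge (4 * s / (s - 1))
  have hs1pos : 0 < s - 1 := by linarith
  have hKs : 4 * s ≤ ((K : ℝ) + 9) * (s - 1) := by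
    have h1 : 4 * s / (s - 1) ≤ (K : ℝ) + 9 := by linarith
    calc 4 * s = (4 * s / (s - 1)) * (s - 1) := by field_simp
      _ ≤ ((K : ℝ) + 9) * (s - 1) := mul_le_mul_of_nonneg_right h1 (le_of_lt hs1pos)
  have hexp : ((K : ℝ) + 9) * (1 / s) ≤ (K : ℝ) + 5 := by
    rw [mul_one_div, div_le_iff₀ hs0]
    nlinarith
  -- rpow comparison for the weight
  have hMle : ∀ y : EuclideanSpace ℝ (Fin n),
      M (‖y‖ ^ 2) ^ (K + 5) ≤ (rho K y) ^ (1 / s) := by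
    intro y
    have htt : (0 : ℝ) ≤ ‖y‖ ^ 2 := by positivity
    have herho : rho (n := n) K y = M (‖y‖ ^ 2) ^ (K + 9) := rfl
    rcases eq_or_lt_of_le (M_nonneg (‖y‖ ^ 2)) with h0 | h0
    · rw [herho, ← h0, zero_pow (by omega : K + 5 ≠ 0), zero_pow (by omega : K + 9 ≠ 0),
        Real.zero_rpow (by positivity : 1 / s ≠ 0)]
    · have hle1 : M (‖y‖ ^ 2) ≤ 1 := M_le_one htt
      rw [herho]
      rw [← Real.rpow_natCast (M (‖y‖ ^ 2)) (K + 5), ← Real.rpow_natCast (M (‖y‖ ^ 2)) (K + 9),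
        ← Real.rpow_mul (le_of_lt h0)]
      apply Real.rpow_le_rpow_of_exponent_ge h0 hle1
      push_cast
      exact hexp
  -- the Young-type integral bound
  have hIbound : ∀ (w : EuclideanSpace ℝ (Fin n) → ℝ) (Cw : ℝ), 0 ≤ Cw →
      (∀ y, |w y| ≤ Cw * M (‖y‖ ^ 2) ^ (K + 5)) → Continuous w → HasCompactSupport w →
      ∀ (a : EuclideanSpace ℝ (Fin n) → ℝ), Continuous a → (∀ y, 0 ≤ a y) →
      ∫ y, a y * w y ≤ Cw / s * (∫ y, a y ^ s * rho K y) +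
        Cw / s.conjExponent *
          (volume (Metric.closedBall (0 : EuclideanSpace ℝ (Fin n)) 1)).toReal := by
    intro w Cw hCw hwb hwc hwcs a hac ha
    have hasc : Continuous fun y => a y ^ s := by
      rw [continuous_iff_continuousAt]
      intro y
      exact (Real.continuousAt_rpow_const (a y) s (Or.inr hs0.le)).comp hac.continuousAt
    have hint1 : Integrable (fun y => a y * w y) volume := integ_mul_cs hac hwc hwcs
    have hint2 : Integrable (fun y => a y ^ s * rho K y) volume :=
      integ_mul_cs hasc rho_continuous rho_cs
    have hint3 : Integrable (fun y : EuclideanSpace ℝ (Fin n) =>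
        Set.indicator (Metric.closedBall (0 : EuclideanSpace ℝ (Fin n)) 1)
          (fun _ => (1 : ℝ)) y) volume := by
      apply MeasureTheory.IntegrableOn.integrable_indicator _ measurableSet_closedBall
      exact integrableOn_const measure_closedBall_lt_top.ne
    have hptw : ∀ y, a y * w y ≤ Cw / s * (a y ^ s * rho K y) +
        Cw / s.conjExponent * Set.indicator (Metric.closedBall (0 : EuclideanSpace ℝ (Fin n)) 1)
          (fun _ => (1 : ℝ)) y := by
      intro y
      rcases le_or_gt ‖y‖ 1 with hy | hy
      · have hind : Set.indicator (Metric.closedBall (0 : EuclideanSpace ℝ (Fin n)) 1)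
            (fun _ => (1 : ℝ)) y = 1 := by
          apply Set.indicator_of_mem
          simpa [Metric.mem_closedBall, dist_zero_right] using hy
        rw [hind, mul_one]
        have hrnn : (0 : ℝ) ≤ (rho K y) ^ (1 / s) := Real.rpow_nonneg (rho_nonneg y) _
        have step1 : a y * w y ≤ Cw * (a y * (rho K y) ^ (1 / s)) := by
          calc a y * w y ≤ a y * |w y| :=
                mul_le_mul_of_nonneg_left (le_abs_self _) (ha y)
            _ ≤ a y * (Cw * M (‖y‖ ^ 2) ^ (K + 5)) :=
                mul_le_mul_of_nonneg_left (hwb y) (ha y)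
            _ ≤ a y * (Cw * (rho K y) ^ (1 / s)) := by
                apply mul_le_mul_of_nonneg_left _ (ha y)
                exact mul_le_mul_of_nonneg_left (hMle y) hCw
            _ = Cw * (a y * (rho K y) ^ (1 / s)) := by ring
        have young := Real.young_inequality_of_nonneg
          (mul_nonneg (ha y) hrnn) zero_le_one hconj
        have hys : (a y * (rho K y) ^ (1 / s)) ^ s = a y ^ s * rho K y := by
          rw [Real.mul_rpow (ha y) hrnn, ← Real.rpow_mul (rho_nonneg y),
            one_div_mul_cancel (ne_of_gt hs0), Real.rpow_one]
        rw [mul_one, hys, Real.one_rpow] at young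
        calc a y * w y ≤ Cw * (a y * (rho K y) ^ (1 / s)) := step1
          _ ≤ Cw * (a y ^ s * rho K y / s + 1 / s.conjExponent) :=
              mul_le_mul_of_nonneg_left young hCw
          _ = Cw / s * (a y ^ s * rho K y) + Cw / s.conjExponent * 1 := by ring
          _ = _ := by rw [mul_one]
      · have hM0 : M (‖y‖ ^ 2) = 0 := M_eq_zero (by nlinarith)
        have hw0 : w y = 0 := by
          have := hwb y
          rw [hM0, zero_pow (by omega : K + 5 ≠ 0), mul_zero] at this
          exact abs_eq_zero.1 (le_antisymm this (abs_nonneg _))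
        rw [hw0, mul_zero]
        apply add_nonneg
        · exact mul_nonneg (by positivity)
            (mul_nonneg (Real.rpow_nonneg (ha y) _) (rho_nonneg y))
        · exact mul_nonneg (by positivity) (Set.indicator_nonneg (fun _ _ => zero_le_one) y)
    calc ∫ y, a y * w y ≤ ∫ y, (Cw / s * (a y ^ s * rho K y) +
          Cw / s.conjExponent * Set.indicator
            (Metric.closedBall (0 : EuclideanSpace ℝ (Fin n)) 1) (fun _ => (1 : ℝ)) y) :=
          integral_mono hint1 ((hint2.const_mul _).add (hint3.const_mul _)) hptw
      _ = Cw / s * (∫ y, a y ^ s * rho K y) + Cw / s.conjExponent *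
            (volume (Metric.closedBall (0 : EuclideanSpace ℝ (Fin n)) 1)).toReal := by
          rw [integral_add (hint2.const_mul _) (hint3.const_mul _), integral_const_mul,
            integral_const_mul, integral_indicator_const _ measurableSet_closedBall]
          simp [smul_eq_mul, Measure.real]
  -- final chain
  set κ : ℝ := ∫ y : EuclideanSpace ℝ (Fin n), rho K y with hκ_def
  have hκ : 0 < κ := kappa_pos
  set volB : ℝ := (volume (Metric.closedBall (0 : EuclideanSpace ℝ (Fin n)) 1)).toReal
    with hvolB_def
  have hvolB : 0 ≤ volB := ENNReal.toReal_nonneg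
  set C1 : ℝ := (4 + 2 * (n : ℝ)) * ((K : ℝ) + 9) ^ 4 with hC1_def
  set C2 : ℝ := (4 * (12 + 2 * (n : ℝ)) + 2 * (n : ℝ) * (8 + 2 * (n : ℝ))) * ((K : ℝ) + 9) ^ 4
    with hC2_def
  have hC1 : 0 ≤ C1 := by rw [hC1_def]; positivity
  have hC2 : 0 ≤ C2 := by rw [hC2_def]; positivity
  have hmain : ∀ R : ℝ, 1 ≤ R →
      lap u x0 * κ * R ^ 2 ≤ C1 / s * (∫ y, (u (x0 + R • y)) ^ s * rho K y) +
          C1 / s.conjExponent * volB ∧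
      R ^ 4 * (∫ y, (u (x0 + R • y)) ^ s * rho K y) ≤
        C2 / s * (∫ y, (u (x0 + R • y)) ^ s * rho K y) + C2 / s.conjExponent * volB := by
    intro R hR1
    have hR0 : (0:ℝ) ≤ R := by linarith
    have huA2 : ContDiff ℝ 2 (fun y : EuclideanSpace ℝ (Fin n) => u (x0 + R • y)) :=
      hu2.comp (contDiff_affine x0 R)
    have huAc : Continuous (fun y : EuclideanSpace ℝ (Fin n) => u (x0 + R • y)) :=
      huA2.continuous
    have huAnn : ∀ y : EuclideanSpace ℝ (Fin n), 0 ≤ u (x0 + R • y) := fun y => hnonneg i0 _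
    have hvA2 : ContDiff ℝ 2 (fun y : EuclideanSpace ℝ (Fin n) => lap u (x0 + R • y)) :=
      hv2.comp (contDiff_affine x0 R)
    have hI1 : ∫ y, lap (fun z => u (x0 + R • z)) y * rho K y
        = ∫ y, u (x0 + R • y) * lrho K n y := by
      rw [ibp_lap huA2 rho_diff pd_rho_diff pd_rho_continuous pd_pd_rho_continuous rho_cs,
        lap_rho]
    have hlow : lap u x0 * κ * R ^ 2 ≤ ∫ y, u (x0 + R • y) * lrho K n y := by
      rw [← hI1]
      have e2 : ∀ y, lap (fun z => u (x0 + R • z)) y = R ^ 2 * lap u (x0 + R • y) :=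
        lap_comp_affine x0 R u hu2
      have hpull : ∫ y, lap (fun z => u (x0 + R • z)) y * rho K y
          = R ^ 2 * ∫ y, lap u (x0 + R • y) * rho K y := by
        rw [← integral_const_mul]
        congr 1; funext y; rw [e2 y]; ring
      rw [hpull]
      have hmm := mean_mono (K := K) (lap u) hv2 hlapv_nonneg x0 hR0
      calc lap u x0 * κ * R ^ 2 = R ^ 2 * (lap u x0 * κ) := by ring
        _ ≤ R ^ 2 * ∫ y, lap u (x0 + R • y) * rho K y := by
            apply mul_le_mul_of_nonneg_left _ (by positivity)
            exact hmm
    have hlrb : ∀ y : EuclideanSpace ℝ (Fin n),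
        |lrho K n y| ≤ C1 * M (‖y‖ ^ 2) ^ (K + 5) := fun y =>
      abs_H1_le (by positivity)
    have hup1 := hIbound (lrho K n) C1 hC1 hlrb lrho_continuous lrho_cs _ huAc huAnn
    refine ⟨le_trans hlow hup1, ?_⟩
    -- second estimate
    have hasc : Continuous fun y : EuclideanSpace ℝ (Fin n) => (u (x0 + R • y)) ^ s := by
      rw [continuous_iff_continuousAt]
      intro y
      exact (Real.continuousAt_rpow_const _ s (Or.inr hs0.le)).comp huAc.continuousAt
    have hJ1 : ∫ y, (u (x0 + R • y)) ^ s * rho K y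
        ≤ ∫ y, lap (lap u) (x0 + R • y) * rho K y := by
      apply integral_mono (integ_mul_cs hasc rho_continuous rho_cs)
        (integ_mul_cs (hlapvc.comp (continuous_const.add (continuous_id.const_smul R)))
          rho_continuous rho_cs)
      intro y
      exact mul_le_mul_of_nonneg_right (hups _) (rho_nonneg y)
    have hI2 : ∫ y, lap (fun z => lap u (x0 + R • z)) y * rho K y
        = ∫ y, lap u (x0 + R • y) * lrho K n y := by
      rw [ibp_lap hvA2 rho_diff pd_rho_diff pd_rho_continuous pd_pd_rho_continuous rho_cs,
        lap_rho]
    have hI3 : ∫ y, lap (fun z => u (x0 + R • z)) y * lrho K n y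
        = ∫ y, u (x0 + R • y) * LL K n (‖y‖ ^ 2) := by
      rw [ibp_lap huA2 lrho_diff pd_lrho_diff pd_lrho_continuous pd_pd_lrho_continuous lrho_cs,
        lap_lrho]
    have e2u : ∀ y, lap (fun z => u (x0 + R • z)) y = R ^ 2 * lap u (x0 + R • y) :=
      lap_comp_affine x0 R u hu2
    have e2v : ∀ y, lap (fun z => lap u (x0 + R • z)) y = R ^ 2 * lap (lap u) (x0 + R • y) :=
      lap_comp_affine x0 R (lap u) hv2
    have hLLcont : Continuous fun y : EuclideanSpace ℝ (Fin n) => LL K n (‖y‖ ^ 2) :=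
      continuous_LL.comp (continuous_norm.pow 2)
    have hLLcs : HasCompactSupport fun y : EuclideanSpace ℝ (Fin n) => LL K n (‖y‖ ^ 2) :=
      radial_hasCompactSupport _ fun t ht => LL_eq_zero ht
    have hLLb : ∀ y : EuclideanSpace ℝ (Fin n),
        |LL K n (‖y‖ ^ 2)| ≤ C2 * M (‖y‖ ^ 2) ^ (K + 5) := fun y => abs_LL_le (by positivity)
    have hup2 := hIbound (fun y => LL K n (‖y‖ ^ 2)) C2 hC2 hLLb hLLcont hLLcs _ huAc huAnn
    calc R ^ 4 * ∫ y, (u (x0 + R • y)) ^ s * rho K y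
        ≤ R ^ 4 * ∫ y, lap (lap u) (x0 + R • y) * rho K y :=
          mul_le_mul_of_nonneg_left hJ1 (by positivity)
      _ = R ^ 2 * ∫ y, lap (fun z => lap u (x0 + R • z)) y * rho K y := by
          rw [← integral_const_mul, ← integral_const_mul]
          congr 1; funext y; rw [e2v y]; ring
      _ = R ^ 2 * ∫ y, lap u (x0 + R • y) * lrho K n y := by rw [hI2]
      _ = ∫ y, lap (fun z => u (x0 + R • z)) y * lrho K n y := by
          rw [← integral_const_mul]
          congr 1; funext y; rw [e2u y]; ring
      _ = ∫ y, u (x0 + R • y) * LL K n (‖y‖ ^ 2) := hI3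
      _ ≤ C2 / s * (∫ y, (u (x0 + R • y)) ^ s * rho K y) + C2 / s.conjExponent * volB := hup2
  -- choose R large and derive the contradiction
  set c : ℝ := lap u x0 with hc_def
  have hcκ : 0 < c * κ := mul_pos hc hκ
  set D2 : ℝ := C2 / s.conjExponent * volB with hD2_def
  have hD2 : 0 ≤ D2 := by
    rw [hD2_def]
    exact mul_nonneg (div_nonneg hC2 hs'0.le) hvolB
  set A : ℝ := C1 / s * (2 * D2) + C1 / s.conjExponent * volB with hA_def
  set R : ℝ := max (max 1 (2 * C2 / s)) ((A + 1) / (c * κ)) with hR_def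
  have hR1 : 1 ≤ R := le_trans (le_max_left _ _) (le_max_left _ _)
  have hRC2 : 2 * C2 / s ≤ R := le_trans (le_max_right 1 _) (le_max_left _ _)
  have hRA : (A + 1) / (c * κ) ≤ R := le_max_right _ _
  obtain ⟨h1, h2⟩ := hmain R hR1
  set J : ℝ := ∫ y, (u (x0 + R • y)) ^ s * rho K y with hJ_def
  have hJnn : 0 ≤ J := by
    rw [hJ_def]
    exact integral_nonneg fun y =>
      mul_nonneg (Real.rpow_nonneg (hnonneg i0 _) _) (rho_nonneg y)
  have hRR4 : R ≤ R ^ 4 := by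
    have h := pow_le_pow_right₀ hR1 (show 1 ≤ 4 by norm_num)
    simpa using h
  have hR4 : 2 * C2 / s ≤ R ^ 4 := le_trans hRC2 hRR4
  have habs : C2 / s * J ≤ R ^ 4 / 2 * J := by
    apply mul_le_mul_of_nonneg_right _ hJnn
    have he : 2 * (C2 / s) = 2 * C2 / s := by ring
    linarith
  have hJb : J ≤ 2 * D2 := by
    have hstep : R ^ 4 / 2 * J ≤ D2 := by linarith
    have hR41 : (1:ℝ) ≤ R ^ 4 := one_le_pow₀ hR1
    have hhalf : (1:ℝ)/2 * J ≤ R ^ 4 / 2 * J :=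
      mul_le_mul_of_nonneg_right (by linarith) hJnn
    linarith
  have hAub : c * κ * R ^ 2 ≤ A := by
    calc c * κ * R ^ 2 ≤ C1 / s * J + C1 / s.conjExponent * volB := h1
      _ ≤ C1 / s * (2 * D2) + C1 / s.conjExponent * volB := by
          apply add_le_add_left
          exact mul_le_mul_of_nonneg_left hJb (div_nonneg hC1 hs0.le)
      _ = A := hA_def.symm
  have hAlb : A + 1 ≤ c * κ * R ^ 2 := by
    have h3 : A + 1 ≤ c * κ * R := by
      rw [div_le_iff₀ hcκ] at hRA
      linarith [hRA]
    have hRsq : R ≤ R ^ 2 := by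
      nlinarith [mul_nonneg (le_trans zero_le_one hR1) (sub_nonneg.2 hR1)]
    have h4 : c * κ * R ≤ c * κ * R ^ 2 := by
      have := mul_le_mul_of_nonneg_left hRsq hcκ.le
      calc c * κ * R = c * κ * R := rfl
        _ ≤ c * κ * R ^ 2 := by
            rw [mul_assoc, mul_assoc] at this ⊢
            exact this
    linarith
  linarith
end

section
/- Let n ≥ 5 and C₀ > 0. Suppose ψ : B₂ → ℝ is C¹ and positive on the ball B₂ ⊂ ℝ^n of radius 2 centered at the origin, and |∇ψ(y)| ≤ C₀ ψ(y) for all y ∈ B_{3/2}. Then there exists r₀ ∈ (0, 1/2), depending only on n and C₀, such that for every x ∈ B₁, every 0 < μ ≤ r₀, and every y ∈ B_{3/2} with |y − x| ≥ μ, one has (μ/|y − x|)^{n−4} ψ( x + μ² (y − x)/|y − x|² ) ≤ ψ(y). -/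
open Metric

/-- Key scalar inequality used in the proof of the Kelvin-transform
comparison lemma. -/
lemma key_ineq14 (C₀ : ℝ) (hC₀ : 0 < C₀) (μ d : ℝ) (hμ : 0 < μ) (hμd : μ ≤ d)
    (hd : d < 5 / 2)
    (hμr : μ ≤ min (1 / 4) (min 1 (1 / (2 * C₀)) * Real.exp (-(3 * C₀)))) :
    C₀ * (d - μ ^ 2 / d) ≤ Real.log (d / μ) := by
  have hd0 : 0 < d := lt_of_lt_of_le hμ hμd
  set δ : ℝ := min 1 (1 / (2 * C₀)) with hδdef
  have hδpos : 0 < δ := lt_min one_pos (by positivity)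
  have hδC : C₀ * δ ≤ 1 / 2 := by
    have h1 : δ ≤ 1 / (2 * C₀) := min_le_right _ _
    have h2 : C₀ * (1 / (2 * C₀)) = 1 / 2 := by field_simp
    nlinarith
  have hμδ : μ ≤ δ * Real.exp (-(3 * C₀)) := le_trans hμr (min_le_right _ _)
  rcases le_or_gt d δ with hcase | hcase
  · -- small d : use log x ≥ 1 - 1/x
    have hlog : Real.log (μ / d) ≤ μ / d - 1 :=
      Real.log_le_sub_one_of_pos (div_pos hμ hd0)
    have hinv : Real.log (d / μ) = - Real.log (μ / d) := by
      rw [← Real.log_inv]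
      congr 1
      field_simp
    rw [hinv]
    have h1 : 1 - μ / d ≤ - Real.log (μ / d) := by linarith
    refine le_trans ?_ h1
    have hCd : C₀ * (d + μ) ≤ 1 := by nlinarith
    have key : C₀ * (d - μ ^ 2 / d) * d ≤ (1 - μ / d) * d := by
      have e1 : C₀ * (d - μ ^ 2 / d) * d = C₀ * (d + μ) * (d - μ) := by
        field_simp; ring
      have e2 : (1 - μ / d) * d = d - μ := by field_simp
      rw [e1, e2]
      nlinarith
    exact le_of_mul_le_mul_right key hd0
  · -- large d : the logarithm beats the fixed constant
    have h1 : C₀ * (d - μ ^ 2 / d) ≤ 3 * C₀ := by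
      have h2 : (0:ℝ) ≤ μ ^ 2 / d := by positivity
      nlinarith
    refine le_trans h1 ?_
    have hde : Real.exp (3 * C₀) ≤ d / μ := by
      have h2 : δ * Real.exp (-(3 * C₀)) * Real.exp (3 * C₀) = δ := by
        rw [mul_assoc, ← Real.exp_add]; simp
      rw [le_div_iff₀ hμ]
      calc Real.exp (3 * C₀) * μ ≤ Real.exp (3 * C₀) * (δ * Real.exp (-(3 * C₀))) := by
            have := Real.exp_pos (3 * C₀); nlinarith
      _ = δ := by rw [mul_comm]; exact h2
      _ ≤ d := hcase.le
    calc (3 : ℝ) * C₀ = Real.log (Real.exp (3 * C₀)) := (Real.log_exp _).symm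
    _ ≤ Real.log (d / μ) := Real.log_le_log (Real.exp_pos _) hde

set_option maxHeartbeats 1000000 in
/-- the Kelvin-transform comparison lemma for positive C¹
functions with bounded logarithmic gradient; the radius `r₀` depends only on
`n` and `C₀`. -/
theorem statement14 (n : ℕ) (hn : 5 ≤ n) (C₀ : ℝ) (hC₀ : 0 < C₀) :
    ∃ r₀ : ℝ, 0 < r₀ ∧ r₀ < 1 / 2 ∧
      ∀ ψ : EuclideanSpace ℝ (Fin n) → ℝ,
        ContDiffOn ℝ 1 ψ (ball (0 : EuclideanSpace ℝ (Fin n)) 2) →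
        (∀ x ∈ ball (0 : EuclideanSpace ℝ (Fin n)) 2, 0 < ψ x) →
        (∀ y ∈ ball (0 : EuclideanSpace ℝ (Fin n)) (3 / 2),
          ‖fderiv ℝ ψ y‖ ≤ C₀ * ψ y) →
        ∀ x ∈ ball (0 : EuclideanSpace ℝ (Fin n)) 1,
        ∀ μ : ℝ, 0 < μ → μ ≤ r₀ →
        ∀ y ∈ ball (0 : EuclideanSpace ℝ (Fin n)) (3 / 2), μ ≤ ‖y - x‖ →
          (μ / ‖y - x‖) ^ ((n : ℝ) - 4) *
              ψ (x + (μ / ‖y - x‖) ^ 2 • (y - x)) ≤ ψ y := by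
  refine ⟨min (1 / 4) (min 1 (1 / (2 * C₀)) * Real.exp (-(3 * C₀))),
    lt_min (by norm_num) (by positivity),
    lt_of_le_of_lt (min_le_left _ _) (by norm_num), ?_⟩
  intro ψ hψ hpos hgrad x hx μ hμ hμr y hy hμd
  set d : ℝ := ‖y - x‖ with hddef
  have hd0 : 0 < d := lt_of_lt_of_le hμ hμd
  set t : ℝ := (μ / d) ^ 2 with htdef
  set z : EuclideanSpace ℝ (Fin n) := x + t • (y - x) with hz
  have ht0 : 0 < t := by positivity
  have hdiv1 : μ / d ≤ 1 := (div_le_one hd0).2 hμd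
  have ht1 : t ≤ 1 := by
    have h0 : 0 < μ / d := div_pos hμ hd0
    nlinarith
  rw [mem_ball_zero_iff] at hx hy
  have hd52 : d < 5 / 2 := by
    calc d ≤ ‖y‖ + ‖x‖ := norm_sub_le _ _
    _ < 5 / 2 := by linarith
  -- z lies on the segment [x, y] ⊆ ball 0 (3/2)
  have hzconv : z = (1 - t) • x + t • y := by
    rw [hz]; module
  have hz32 : z ∈ ball (0 : EuclideanSpace ℝ (Fin n)) (3 / 2) := by
    rw [hzconv]
    exact (convex_ball (0 : EuclideanSpace ℝ (Fin n)) (3 / 2))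
      (mem_ball_zero_iff.2 (by linarith)) (mem_ball_zero_iff.2 hy)
      (by linarith) ht0.le (by ring)
  have hy32 : y ∈ ball (0 : EuclideanSpace ℝ (Fin n)) (3 / 2) := mem_ball_zero_iff.2 hy
  have hsub : ball (0 : EuclideanSpace ℝ (Fin n)) (3 / 2) ⊆
      ball (0 : EuclideanSpace ℝ (Fin n)) 2 := ball_subset_ball (by norm_num)
  -- differentiability and log-gradient bound
  have hdiff : ∀ p ∈ ball (0 : EuclideanSpace ℝ (Fin n)) (3 / 2),
      DifferentiableAt ℝ ψ p := fun p hp =>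
    (hψ.differentiableOn one_ne_zero).differentiableAt (isOpen_ball.mem_nhds (hsub hp))
  have hlog : ∀ p ∈ ball (0 : EuclideanSpace ℝ (Fin n)) (3 / 2),
      HasFDerivAt (fun q => Real.log (ψ q)) ((ψ p)⁻¹ • fderiv ℝ ψ p) p := fun p hp =>
    ((hdiff p hp).hasFDerivAt).log (ne_of_gt (hpos p (hsub hp)))
  have hbound : ∀ p ∈ ball (0 : EuclideanSpace ℝ (Fin n)) (3 / 2),
      ‖fderiv ℝ (fun q => Real.log (ψ q)) p‖ ≤ C₀ := by
    intro p hp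
    rw [(hlog p hp).fderiv, norm_smul]
    have hψp : 0 < ψ p := hpos p (hsub hp)
    have hn1 : ‖(ψ p)⁻¹‖ = (ψ p)⁻¹ := by
      rw [Real.norm_eq_abs, abs_of_pos (by positivity)]
    rw [hn1]
    calc (ψ p)⁻¹ * ‖fderiv ℝ ψ p‖ ≤ (ψ p)⁻¹ * (C₀ * ψ p) := by
          have := hgrad p hp
          have h2 : (0:ℝ) < (ψ p)⁻¹ := by positivity
          nlinarith
    _ = C₀ := by field_simp
  have hlip := Convex.norm_image_sub_le_of_norm_fderiv_le
    (fun p hp => (hlog p hp).differentiableAt) hbound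
    (convex_ball (0 : EuclideanSpace ℝ (Fin n)) (3 / 2)) hy32 hz32
  -- ‖z - y‖ = (1 - t) * d
  have hzy : ‖z - y‖ = (1 - t) * d := by
    have h1 : z - y = (t - 1) • (y - x) := by rw [hz]; module
    rw [h1, norm_smul, Real.norm_eq_abs, abs_of_nonpos (by linarith), ← hddef]
    ring
  have hψz : 0 < ψ z := hpos z (hsub hz32)
  have hψy : 0 < ψ y := hpos y (hsub hy32)
  have hlip' : Real.log (ψ z) - Real.log (ψ y) ≤ C₀ * ((1 - t) * d) := by
    rw [hzy] at hlip
    calc Real.log (ψ z) - Real.log (ψ y) ≤ ‖Real.log (ψ z) - Real.log (ψ y)‖ :=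
          le_abs_self _
    _ ≤ C₀ * ((1 - t) * d) := hlip
  -- the key scalar inequality
  have hkey : C₀ * (d - μ ^ 2 / d) ≤ Real.log (d / μ) :=
    key_ineq14 C₀ hC₀ μ d hμ hμd hd52 hμr
  have homega : (1 - t) * d = d - μ ^ 2 / d := by
    rw [htdef]; field_simp
  have hn4 : (1 : ℝ) ≤ (n : ℝ) - 4 := by
    have h5 : (5 : ℝ) ≤ (n : ℝ) := by exact_mod_cast hn
    linarith
  have hlogdμ : 0 ≤ Real.log (d / μ) := by
    apply Real.log_nonneg
    rw [le_div_iff₀ hμ]; nlinarith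
  -- convert everything to exponentials
  have hrpow : (μ / d) ^ ((n : ℝ) - 4) =
      Real.exp (-(((n : ℝ) - 4) * Real.log (d / μ))) := by
    rw [Real.rpow_def_of_pos (div_pos hμ hd0)]
    congr 1
    have h3 : Real.log (μ / d) = - Real.log (d / μ) := by
      rw [← Real.log_inv]; congr 1; field_simp
    rw [h3]; ring
  have hψz' : ψ z ≤ ψ y * Real.exp (C₀ * ((1 - t) * d)) := by
    have h1 : Real.log (ψ z) ≤ Real.log (ψ y) + C₀ * ((1 - t) * d) := by linarith
    calc ψ z = Real.exp (Real.log (ψ z)) := (Real.exp_log hψz).symm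
    _ ≤ Real.exp (Real.log (ψ y) + C₀ * ((1 - t) * d)) := Real.exp_le_exp.2 h1
    _ = ψ y * Real.exp (C₀ * ((1 - t) * d)) := by
        rw [Real.exp_add, Real.exp_log hψy]
  calc (μ / d) ^ ((n : ℝ) - 4) * ψ z
      ≤ (μ / d) ^ ((n : ℝ) - 4) * (ψ y * Real.exp (C₀ * ((1 - t) * d))) := by
        have hp : (0:ℝ) < (μ / d) ^ ((n : ℝ) - 4) :=
          Real.rpow_pos_of_pos (div_pos hμ hd0) _
        nlinarith
  _ = ψ y * (Real.exp (-(((n : ℝ) - 4) * Real.log (d / μ))) *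
        Real.exp (C₀ * ((1 - t) * d))) := by rw [hrpow]; ring
  _ = ψ y * Real.exp (C₀ * ((1 - t) * d) - ((n : ℝ) - 4) * Real.log (d / μ)) := by
        rw [← Real.exp_add]; ring_nf
  _ ≤ ψ y * 1 := by
        have harg : C₀ * ((1 - t) * d) - ((n : ℝ) - 4) * Real.log (d / μ) ≤ 0 := by
          rw [homega]
          have h4 : Real.log (d / μ) ≤ ((n : ℝ) - 4) * Real.log (d / μ) := by nlinarith
          linarith
        have h5 := Real.exp_le_one_iff.2 harg
        nlinarith
  _ = ψ y := mul_one _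
end
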